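/- arXiv:1503.01592 — 2 statements merged into one kernel-verified Lean document; each statement's English description precedes it below -/
import Mathlib

section
/- Let G be a graph obtained from K_n (n ≥ 3) by subdividing every edge exactly k times, and let r = (n − 1)(k + 1) − ⌊(k+1)/2⌋. For each connected vertex set X of G with |X| ≤ r, all branch vertices (vertices of degree n − 1) not in X lie in a single component C(X) of G − X; moreover, the collection of all such components C(X), over all connected X with |X| ≤ r, is a bramble of G whose connected order exceeds r. -/
open SimpleGraph

universe u

/-- `x` and `y` are joined by a walk in `G` all of whose vertices lie in `S`. -/
def ConnIn {V : Type u} (G : SimpleGraph V) (S : Set V) (x y : V) : Prop :=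
  ∃ p : G.Walk x y, ∀ v ∈ p.support, v ∈ S

/-- `S` is a (nonempty) connected vertex set of `G`, i.e. `G[S]` is connected. -/
def IsConnSet {V : Type u} (G : SimpleGraph V) (S : Set V) : Prop :=
  S.Nonempty ∧ ∀ x ∈ S, ∀ y ∈ S, ConnIn G S x y

/-- A tree-decomposition of `G` over the tree `T`. -/
structure TreeDecomp {V ι : Type u} (G : SimpleGraph V) (T : SimpleGraph ι) where
  isTree : T.IsTree
  bag : ι → Set V
  exists_bag : ∀ v : V, ∃ t, v ∈ bag t
  exists_bag_adj : ∀ ⦃u v : V⦄, G.Adj u v → ∃ t, u ∈ bag t ∧ v ∈ bag t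
  bag_sep : ∀ ⦃t₁ t₃ : ι⦄ (p : T.Walk t₁ t₃), p.IsPath → ∀ t₂ ∈ p.support,
      bag t₁ ∩ bag t₃ ⊆ bag t₂

/-- The union of the bags `B u` over `u ∈ A`. -/
def unionBags {V ι : Type u} (B : ι → Set V) (A : Set ι) : Set V := ⋃ u ∈ A, B u

/-- `s` is a descendant of `t` in the tree `T` rooted at `r`:
`t` lies on the (unique) `r`–`s` path. -/
def Desc {ι : Type u} (T : SimpleGraph ι) (r t s : ι) : Prop :=
  ∃ p : T.Walk r s, p.IsPath ∧ t ∈ p.support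

/-- The set of descendants of `t` (the subtree `T_t`). -/
def descSet {ι : Type u} (T : SimpleGraph ι) (r t : ι) : Set ι := {s | Desc T r t s}

/-- `s` is a child of `t` in the tree `T` rooted at `r`. -/
def IsChild {ι : Type u} (T : SimpleGraph ι) (r t s : ι) : Prop :=
  T.Adj t s ∧ Desc T r t s

/-- The vertex set of the component of `t₁` in `T` minus the edge `t₁t₂`. -/
def Side {ι : Type u} (T : SimpleGraph ι) (t₁ t₂ : ι) : Set ι :=
  {u | ∃ p : T.Walk u t₁, p.IsPath ∧ t₂ ∉ p.support}

/-- The family of bags `B` is stable: for every tree edge `t₁t₂`, both sides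
induce connected subgraphs of `G`. -/
def StableBags {V ι : Type u} (G : SimpleGraph V) (T : SimpleGraph ι) (B : ι → Set V) : Prop :=
  ∀ ⦃t₁ t₂ : ι⦄, T.Adj t₁ t₂ → IsConnSet G (unionBags B (Side T t₁ t₂))

def TreeDecomp.Stable {V ι : Type u} {G : SimpleGraph V} {T : SimpleGraph ι}
    (td : TreeDecomp G T) : Prop :=
  StableBags G T td.bag

/-- `P` is a `t`-admissible path (w.r.t. the root `r` and bags `B`): a shortest
path lying in `V_{T_t}` joining two distinct components of `G[B t]`. -/
structure IsAdmissible {V ι : Type u} (G : SimpleGraph V) (T : SimpleGraph ι)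
    (B : ι → Set V) (r t : ι) {x y : V} (P : G.Walk x y) : Prop where
  isPath : P.IsPath
  support_sub : ∀ v ∈ P.support, v ∈ unionBags B (descSet T r t)
  fst_mem : x ∈ B t
  snd_mem : y ∈ B t
  not_conn : ¬ ConnIn G (B t) x y
  minimal : ∀ ⦃x' y' : V⦄ (Q : G.Walk x' y'), Q.IsPath →
      (∀ v ∈ Q.support, v ∈ unionBags B (descSet T r t)) →
      x' ∈ B t → y' ∈ B t → ¬ ConnIn G (B t) x' y' → P.length ≤ Q.length

/-- The updated bags obtained by adding the path `P` as in `(*)`: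
`W_u = V_u ∪ (V(P) ∩ V_{T_u})` for descendants `u` of `t`, and `W_u = V_u` otherwise. -/
def updatedBag {V ι : Type u} (T : SimpleGraph ι) (B : ι → Set V) (r t : ι)
    {G : SimpleGraph V} {x y : V} (P : G.Walk x y) (u : ι) : Set V :=
  B u ∪ {v | Desc T r t u ∧ v ∈ P.support ∧ v ∈ unionBags B (descSet T r u)}

/-- The tree-width of `G`: the least `k` such that `G` has a tree-decomposition
all of whose bags have at most `k + 1` vertices. -/
noncomputable def treewidth {V : Type u} (G : SimpleGraph V) : ℕ :=
  sInf {k | ∃ (ι : Type u) (T : SimpleGraph ι) (td : TreeDecomp G T),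
    ∀ t, (td.bag t).ncard ≤ k + 1}

/-- A tree-decomposition is connected if every bag is a connected vertex set. -/
def TreeDecomp.IsConn {V ι : Type u} {G : SimpleGraph V} {T : SimpleGraph ι}
    (td : TreeDecomp G T) : Prop :=
  ∀ t, IsConnSet G (td.bag t)

/-- The connected tree-width of `G`. -/
noncomputable def ctw {V : Type u} (G : SimpleGraph V) : ℕ :=
  sInf {k | ∃ (ι : Type u) (T : SimpleGraph ι) (td : TreeDecomp G T),
    td.IsConn ∧ ∀ t, (td.bag t).ncard ≤ k + 1}

/-- The weak connected tree-width of `G`: the least `k` such that `G` has a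
tree-decomposition each of whose bags is contained in a connected set of at
most `k + 1` vertices. -/
noncomputable def wctw {V : Type u} (G : SimpleGraph V) : ℕ :=
  sInf {k | ∃ (ι : Type u) (T : SimpleGraph ι) (td : TreeDecomp G T),
    ∀ t, ∃ X, td.bag t ⊆ X ∧ IsConnSet G X ∧ X.ncard ≤ k + 1}

/-- The characteristic vector over GF(2) of the edge set of a walk. -/
noncomputable def walkChar {V : Type u} {G : SimpleGraph V} {x y : V}
    (p : G.Walk x y) : Sym2 V → ZMod 2 :=
  fun e => by classical exact if e ∈ p.edges then 1 else 0

/-- The characteristic vectors of the cycles of `G` of length at most `ℓ`. -/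
def cycleChars {V : Type u} (G : SimpleGraph V) (ℓ : ℕ) : Set (Sym2 V → ZMod 2) :=
  {f | ∃ (v : V) (p : G.Walk v v), p.IsCycle ∧ p.length ≤ ℓ ∧ f = walkChar p}

/-- The cycles of length at most `ℓ` generate the cycle space of `G` over GF(2). -/
def GeneratesLE {V : Type u} (G : SimpleGraph V) (ℓ : ℕ) : Prop :=
  ∀ ⦃v : V⦄ (p : G.Walk v v), p.IsCycle →
    walkChar p ∈ Submodule.span (ZMod 2) (cycleChars G ℓ)

/-- `ℓ(G)`: the least `ℓ` such that the cycles of length at most `ℓ`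
generate the cycle space of `G`. -/
noncomputable def ellGraph {V : Type u} (G : SimpleGraph V) : ℕ :=
  sInf {ℓ | GeneratesLE G ℓ}

/-- `Γ` is a set of cycles of `G` generating its cycle space over GF(2). -/
def GeneratesSet {V : Type u} (G : SimpleGraph V) (Γ : Set (Σ v : V, G.Walk v v)) : Prop :=
  (∀ c ∈ Γ, c.2.IsCycle) ∧
  ∀ ⦃v : V⦄ (p : G.Walk v v), p.IsCycle →
    walkChar p ∈ Submodule.span (ZMod 2) {f | ∃ c ∈ Γ, f = walkChar c.2}

/-- A bramble: a collection of connected vertex sets, any two of which have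
connected union. -/
def IsBramble {V : Type u} (G : SimpleGraph V) (B : Set (Set V)) : Prop :=
  (∀ S ∈ B, IsConnSet G S) ∧ ∀ S ∈ B, ∀ S' ∈ B, IsConnSet G (S ∪ S')

/-- `X` is a connected cover of the bramble `B`. -/
def IsConnCover {V : Type u} (G : SimpleGraph V) (B : Set (Set V)) (X : Set V) : Prop :=
  IsConnSet G X ∧ ∀ S ∈ B, (X ∩ S).Nonempty

/-- The connected order of a bramble: the least size of a connected cover. -/
noncomputable def connOrder {V : Type u} (G : SimpleGraph V) (B : Set (Set V)) : ℕ :=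
  sInf {n | ∃ X, IsConnCover G B X ∧ X.ncard = n}

/-- The maximum connected order of a bramble of `G`. -/
noncomputable def cbn {V : Type u} (G : SimpleGraph V) : ℕ :=
  sSup {n | ∃ B, IsBramble G B ∧ connOrder G B = n}

/-- A geodesic cycle: a cycle containing a shortest `G`-path between any two
of its vertices. -/
def IsGeodesicCycle {V : Type u} (G : SimpleGraph V) {v : V} (p : G.Walk v v) : Prop :=
  p.IsCycle ∧ ∀ x ∈ p.support, ∀ y ∈ p.support,
    ∃ q : G.Walk x y, q.length = G.dist x y ∧ ∀ e ∈ q.edges, e ∈ p.edges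

/-- The graph obtained from `K_n` by subdividing every edge exactly `k` times:
the edge between `i < j` is replaced by the path
`i, ((i,j),0), ((i,j),1), …, ((i,j),k-1), j`. -/
def subK (n k : ℕ) : SimpleGraph (Fin n ⊕ ({p : Fin n × Fin n // p.1 < p.2} × Fin k)) :=
  SimpleGraph.fromRel fun u v =>
    match u, v with
    | Sum.inl i, Sum.inl j => i < j ∧ k = 0
    | Sum.inl i, Sum.inr (e, c) =>
        (e.val.1 = i ∧ (c : ℕ) = 0) ∨ (e.val.2 = i ∧ (c : ℕ) = k - 1)
    | Sum.inr (e, c), Sum.inr (e', c') => e = e' ∧ (c' : ℕ) = (c : ℕ) + 1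
    | _, _ => False

/-- The bramble of Section 5: all components `C(X)` of `G − X` containing the
branch vertices outside `X`, over all connected `X` of size at most `r`. -/
def subKBramble (n k r : ℕ) : Set (Set (Fin n ⊕ ({p : Fin n × Fin n // p.1 < p.2} × Fin k))) :=
  {C | ∃ (X : Set (Fin n ⊕ ({p : Fin n × Fin n // p.1 < p.2} × Fin k))) (i : Fin n),
    IsConnSet (subK n k) X ∧ X.ncard ≤ r ∧ Sum.inl i ∉ X ∧
    C = {w | ConnIn (subK n k) Xᶜ (Sum.inl i) w}}

section Aux

variable {n k : ℕ}

abbrev EP (n : ℕ) := {p : Fin n × Fin n // p.1 < p.2}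
abbrev VV (n k : ℕ) := Fin n ⊕ (EP n × Fin k)

/-! ### ConnIn basics -/

lemma connIn_refl {V : Type u} {G : SimpleGraph V} {S : Set V} {x : V} (hx : x ∈ S) :
    ConnIn G S x x := ⟨.nil, by simp [hx]⟩

lemma connIn_symm {V : Type u} {G : SimpleGraph V} {S : Set V} {x y : V}
    (h : ConnIn G S x y) : ConnIn G S y x := by
  obtain ⟨p, hp⟩ := h
  exact ⟨p.reverse, by simpa using hp⟩

lemma connIn_trans {V : Type u} {G : SimpleGraph V} {S : Set V} {x y z : V}
    (h : ConnIn G S x y) (h' : ConnIn G S y z) : ConnIn G S x z := by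
  obtain ⟨p, hp⟩ := h; obtain ⟨q, hq⟩ := h'
  refine ⟨p.append q, fun v hv => ?_⟩
  rw [SimpleGraph.Walk.mem_support_append_iff] at hv
  exact hv.elim (hp v) (hq v)

lemma connIn_mono {V : Type u} {G : SimpleGraph V} {S T : Set V} {x y : V}
    (hST : S ⊆ T) (h : ConnIn G S x y) : ConnIn G T x y := by
  obtain ⟨p, hp⟩ := h; exact ⟨p, fun v hv => hST (hp v hv)⟩

lemma connIn_of_adj {V : Type u} {G : SimpleGraph V} {S : Set V} {x y : V}
    (hx : x ∈ S) (hy : y ∈ S) (h : G.Adj x y) : ConnIn G S x y :=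
  ⟨.cons h .nil, by simp [hx, hy]⟩

lemma connIn_mem_left {V : Type u} {G : SimpleGraph V} {S : Set V} {x y : V}
    (h : ConnIn G S x y) : x ∈ S := by
  obtain ⟨p, hp⟩ := h; exact hp x p.start_mem_support

lemma connIn_mem_right {V : Type u} {G : SimpleGraph V} {S : Set V} {x y : V}
    (h : ConnIn G S x y) : y ∈ S := by
  obtain ⟨p, hp⟩ := h; exact hp y p.end_mem_support

lemma isConnSet_union_touch {V : Type u} {G : SimpleGraph V} {S S' : Set V}
    (hS : IsConnSet G S) (hS' : IsConnSet G S')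
    (h : ∃ x ∈ S, ∃ y ∈ S', x = y ∨ G.Adj x y) : IsConnSet G (S ∪ S') := by
  obtain ⟨x, hx, y, hy, hxy⟩ := h
  have hbridge : ConnIn G (S ∪ S') x y := by
    rcases hxy with rfl | hadj
    · exact connIn_refl (Or.inl hx)
    · exact connIn_of_adj (Or.inl hx) (Or.inr hy) hadj
  refine ⟨⟨x, Or.inl hx⟩, fun u hu v hv => ?_⟩
  have key : ∀ w ∈ S ∪ S', ConnIn G (S ∪ S') x w := by
    intro w hw
    rcases hw with hw | hw
    · exact connIn_mono Set.subset_union_left (hS.2 x hx w hw)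
    · exact connIn_trans hbridge (connIn_mono Set.subset_union_right (hS'.2 y hy w hw))
  exact connIn_trans (connIn_symm (key u hu)) (key v hv)

/-! ### subK adjacency -/

lemma adj_left (e : EP n) (c : Fin k) (h : (c : ℕ) = 0) :
    (subK n k).Adj (Sum.inl e.val.1) (Sum.inr (e, c)) := by
  rw [subK, fromRel_adj]
  exact ⟨by simp, Or.inl (Or.inl ⟨rfl, h⟩)⟩

lemma adj_right (e : EP n) (c : Fin k) (h : (c : ℕ) = k - 1) :
    (subK n k).Adj (Sum.inl e.val.2) (Sum.inr (e, c)) := by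
  rw [subK, fromRel_adj]
  exact ⟨by simp, Or.inl (Or.inr ⟨rfl, h⟩)⟩

lemma adj_succ (e : EP n) (c c' : Fin k) (h : (c' : ℕ) = (c : ℕ) + 1) :
    (subK n k).Adj (Sum.inr (e, c)) (Sum.inr (e, c')) := by
  rw [subK, fromRel_adj]
  refine ⟨?_, Or.inl ⟨rfl, h⟩⟩
  simp only [ne_eq, Sum.inr.injEq, Prod.mk.injEq, not_and]
  intro _ hc
  exact absurd (congrArg Fin.val hc) (by omega)

lemma adj_branch (i j : Fin n) (hne : i ≠ j) (hk : k = 0) :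
    (subK n k).Adj (Sum.inl i) (Sum.inl j) := by
  rw [subK, fromRel_adj]
  refine ⟨by simpa using hne, ?_⟩
  rcases lt_or_gt_of_ne hne with h | h
  · exact Or.inl ⟨h, hk⟩
  · exact Or.inr ⟨h, hk⟩

lemma adj_inl_elim {i : Fin n} {w : VV n k} (h : (subK n k).Adj (Sum.inl i) w) :
    (∃ j, w = Sum.inl j ∧ i ≠ j ∧ k = 0) ∨
    (∃ e c, w = Sum.inr (e, c) ∧
      ((e.val.1 = i ∧ (c : ℕ) = 0) ∨ (e.val.2 = i ∧ (c : ℕ) = k - 1))) := by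
  rw [subK, fromRel_adj] at h
  obtain ⟨hne, h⟩ := h
  cases w with
  | inl j =>
    refine Or.inl ⟨j, rfl, by simpa using hne, ?_⟩
    rcases h with ⟨_, h0⟩ | ⟨_, h0⟩ <;> exact h0
  | inr ec =>
    obtain ⟨e, c⟩ := ec
    refine Or.inr ⟨e, c, rfl, ?_⟩
    rcases h with h | h
    · exact h
    · exact h.elim

lemma adj_inr_elim {e : EP n} {c : Fin k} {w : VV n k}
    (h : (subK n k).Adj (Sum.inr (e, c)) w) :
    (w = Sum.inl e.val.1 ∧ (c : ℕ) = 0) ∨ (w = Sum.inl e.val.2 ∧ (c : ℕ) = k - 1) ∨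
    (∃ c' : Fin k, w = Sum.inr (e, c') ∧
      ((c' : ℕ) = (c : ℕ) + 1 ∨ (c : ℕ) = (c' : ℕ) + 1)) := by
  rw [subK, fromRel_adj] at h
  obtain ⟨hne, h⟩ := h
  cases w with
  | inl j =>
    rcases h with h | h
    · exact h.elim
    · rcases h with ⟨rfl, h0⟩ | ⟨rfl, h0⟩
      · exact Or.inl ⟨rfl, h0⟩
      · exact Or.inr (Or.inl ⟨rfl, h0⟩)
  | inr ec =>
    obtain ⟨e', c'⟩ := ec
    rcases h with ⟨rfl, h0⟩ | ⟨he, h0⟩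
    · exact Or.inr (Or.inr ⟨c', rfl, Or.inl h0⟩)
    · cases he; exact Or.inr (Or.inr ⟨c', rfl, Or.inr h0⟩)

end Aux
section Master

variable {n k : ℕ}

/-- Two branch vertices joined inside `X` by a fully-contained subdivided edge. -/
def BRel (X : Set (VV n k)) (i j : Fin n) : Prop :=
  i ≠ j ∧ Sum.inl i ∈ X ∧ Sum.inl j ∈ X ∧
    ∀ e : EP n, (e.val = (i, j) ∨ e.val = (j, i)) → ∀ c : Fin k, Sum.inr (e, c) ∈ X

lemma brel_symm {X : Set (VV n k)} {i j : Fin n} (h : BRel X i j) : BRel X j i := by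
  obtain ⟨h1, h2, h3, h4⟩ := h
  exact ⟨h1.symm, h3, h2, fun e he c => h4 e he.symm c⟩

def MasterConcl (X : Set (VV n k)) (j : Fin n) : VV n k → Prop
  | Sum.inl i => Relation.ReflTransGen (BRel X) i j
  | Sum.inr (e, c) =>
      (Sum.inl e.val.1 ∈ X ∧ (∀ c' : Fin k, (c' : ℕ) ≤ (c : ℕ) → Sum.inr (e, c') ∈ X) ∧
        Relation.ReflTransGen (BRel X) e.val.1 j) ∨
      (Sum.inl e.val.2 ∈ X ∧ (∀ c' : Fin k, (c : ℕ) ≤ (c' : ℕ) → Sum.inr (e, c') ∈ X) ∧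
        Relation.ReflTransGen (BRel X) e.val.2 j)

lemma master' {X : Set (VV n k)} :
    ∀ {u y : VV n k} (p : (subK n k).Walk u y),
      (∀ v ∈ p.support, v ∈ X) → ∀ j : Fin n, y = Sum.inl j → MasterConcl X j u := by
  intro u y p
  induction p with
  | nil =>
    rintro _ j rfl
    exact Relation.ReflTransGen.refl
  | @cons u w _ hadj p ih =>
    rintro hsupp j rfl
    have hu : u ∈ X := hsupp u (by simp)
    have hw : w ∈ X := hsupp w (by simp)
    have hsupp' : ∀ v ∈ p.support, v ∈ X := fun v hv => hsupp v (by simp [hv])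
    have IH := ih hsupp' j rfl
    cases u with
    | inl i =>
      show Relation.ReflTransGen (BRel X) i j
      rcases adj_inl_elim hadj with ⟨j₂, rfl, hne, hk0⟩ | ⟨e, c, rfl, hcase⟩
      · have hrel : BRel X i j₂ :=
          ⟨hne, hu, hw, fun e _ c => absurd c.isLt (by omega)⟩
        exact Relation.ReflTransGen.head hrel IH
      · have hlt := e.prop
        rcases hcase with ⟨he1, hc0⟩ | ⟨he2, hck⟩
        · -- entered at the low end, i = e.val.1
          rcases IH with ⟨_, _, hrtg⟩ | ⟨hm2, hhi, hrtg⟩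
          · rw [he1] at hrtg; exact hrtg
          · have hrel : BRel X i e.val.2 := by
              subst he1
              refine ⟨Fin.ne_of_lt hlt, hu, hm2, fun e' he' c'' => ?_⟩
              rcases he' with he' | he'
              · have : e' = e := Subtype.ext (by rw [he'])
                subst this
                exact hhi c'' (by omega)
              · exfalso
                have h2 := e'.prop
                rw [he'] at h2
                exact absurd h2 (not_lt.mpr (le_of_lt hlt))
            exact Relation.ReflTransGen.head hrel hrtg
        · -- entered at the high end, i = e.val.2
          rcases IH with ⟨hm1, hlo, hrtg⟩ | ⟨_, _, hrtg⟩
          swap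
          · rw [he2] at hrtg; exact hrtg
          · have hrel : BRel X i e.val.1 := by
              subst he2
              refine ⟨(Fin.ne_of_lt hlt).symm, hu, hm1, fun e' he' c'' => ?_⟩
              rcases he' with he' | he'
              · exfalso
                have := e'.prop
                rw [he'] at this
                exact absurd this (not_lt.mpr (le_of_lt hlt))
              · have : e' = e := Subtype.ext (by rw [he'])
                subst this
                exact hlo c'' (by omega)
            exact Relation.ReflTransGen.head hrel hrtg
    | inr ec =>
      obtain ⟨e, c⟩ := ec
      rcases adj_inr_elim hadj with ⟨rfl, hc0⟩ | ⟨rfl, hck⟩ | ⟨c', rfl, hstep⟩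
      · -- stepped to the low endpoint
        refine Or.inl ⟨hw, fun c'' hc'' => ?_, IH⟩
        have : c'' = c := Fin.ext (by omega)
        subst this; exact hu
      · -- stepped to the high endpoint
        refine Or.inr ⟨hw, fun c'' hc'' => ?_, IH⟩
        have hck'' : (c'' : ℕ) ≤ k - 1 := by have := c''.isLt; omega
        have : c'' = c := Fin.ext (by omega)
        subst this; exact hu
      · -- stepped along the interior
        rcases IH with ⟨hm, hint, hrtg⟩ | ⟨hm, hint, hrtg⟩
        · refine Or.inl ⟨hm, fun c'' hc'' => ?_, hrtg⟩
          rcases Nat.lt_or_ge (c'' : ℕ) ((c' : ℕ) + 1) with h | h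
          · exact hint c'' (by omega)
          · have : c'' = c := Fin.ext (by omega)
            subst this; exact hu
        · refine Or.inr ⟨hm, fun c'' hc'' => ?_, hrtg⟩
          rcases Nat.lt_or_ge ((c' : ℕ)) ((c'' : ℕ) + 1) with h | h
          · exact hint c'' (by omega)
          · have : c'' = c := Fin.ext (by omega)
            subst this; exact hu

lemma master {X : Set (VV n k)} {j : Fin n} {u : VV n k}
    (p : (subK n k).Walk u (Sum.inl j)) (hp : ∀ v ∈ p.support, v ∈ X) :
    MasterConcl X j u := master' p hp j rfl

end Master
section Walks

variable {n k : ℕ}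

lemma exists_walk_left (e : EP n) :
    ∀ (m : ℕ) (hm : m < k), ∃ p : (subK n k).Walk (Sum.inl e.val.1) (Sum.inr (e, ⟨m, hm⟩)),
      ∀ v ∈ p.support, v = Sum.inl e.val.1 ∨
        ∃ c' : Fin k, (c' : ℕ) ≤ m ∧ v = Sum.inr (e, c') := by
  intro m
  induction m with
  | zero =>
    intro hm
    refine ⟨.cons (adj_left e ⟨0, hm⟩ rfl) .nil, ?_⟩
    intro v hv
    simp only [SimpleGraph.Walk.support_cons, SimpleGraph.Walk.support_nil,
      List.mem_cons, List.not_mem_nil, or_false] at hv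
    rcases hv with rfl | rfl
    · exact Or.inl rfl
    · exact Or.inr ⟨⟨0, hm⟩, le_refl 0, rfl⟩
  | succ m ih =>
    intro hm
    obtain ⟨p, hp⟩ := ih (by omega)
    refine ⟨p.concat (adj_succ e ⟨m, by omega⟩ ⟨m + 1, hm⟩ rfl), ?_⟩
    intro v hv
    rw [SimpleGraph.Walk.support_concat, List.mem_append] at hv
    rcases hv with hv | hv
    · rcases hp v hv with h | ⟨c', hc', rfl⟩
      · exact Or.inl h
      · exact Or.inr ⟨c', by omega, rfl⟩
    · rw [List.mem_singleton] at hv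
      subst hv
      exact Or.inr ⟨⟨m + 1, hm⟩, le_refl _, rfl⟩

lemma exists_walk_right (e : EP n) :
    ∀ (d m : ℕ) (hm : m < k) (hd : m = k - 1 - d),
      ∃ p : (subK n k).Walk (Sum.inl e.val.2) (Sum.inr (e, ⟨m, hm⟩)),
      ∀ v ∈ p.support, v = Sum.inl e.val.2 ∨
        ∃ c' : Fin k, m ≤ (c' : ℕ) ∧ v = Sum.inr (e, c') := by
  intro d
  induction d with
  | zero =>
    intro m hm hd
    refine ⟨.cons (adj_right e ⟨m, hm⟩ (show m = k - 1 by omega)) .nil, ?_⟩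
    intro v hv
    simp only [SimpleGraph.Walk.support_cons, SimpleGraph.Walk.support_nil,
      List.mem_cons, List.not_mem_nil, or_false] at hv
    rcases hv with rfl | rfl
    · exact Or.inl rfl
    · exact Or.inr ⟨⟨m, hm⟩, le_refl _, rfl⟩
  | succ d ih =>
    intro m hm hd
    by_cases hsat : k - 1 - d = k - 1 - (d + 1)
    · exact ih m hm (by omega)
    · obtain ⟨p, hp⟩ := ih (m + 1) (by omega) (by omega)
      refine ⟨p.concat (adj_succ e ⟨m, hm⟩ ⟨m + 1, by omega⟩ rfl).symm, ?_⟩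
      intro v hv
      rw [SimpleGraph.Walk.support_concat, List.mem_append] at hv
      rcases hv with hv | hv
      · rcases hp v hv with h | ⟨c', hc', rfl⟩
        · exact Or.inl h
        · exact Or.inr ⟨c', by omega, rfl⟩
      · rw [List.mem_singleton] at hv
        subst hv
        exact Or.inr ⟨⟨m, hm⟩, le_refl _, rfl⟩

lemma exists_walk_full (e : EP n) :
    ∃ p : (subK n k).Walk (Sum.inl e.val.1) (Sum.inl e.val.2),
      ∀ v ∈ p.support, v = Sum.inl e.val.1 ∨ v = Sum.inl e.val.2 ∨
        ∃ c' : Fin k, v = Sum.inr (e, c') := by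
  rcases Nat.eq_zero_or_pos k with hk | hk
  · refine ⟨.cons (adj_branch _ _ (Fin.ne_of_lt e.prop) hk) .nil, ?_⟩
    intro v hv
    simp only [SimpleGraph.Walk.support_cons, SimpleGraph.Walk.support_nil,
      List.mem_cons, List.not_mem_nil, or_false] at hv
    rcases hv with rfl | rfl
    · exact Or.inl rfl
    · exact Or.inr (Or.inl rfl)
  · obtain ⟨p, hp⟩ := exists_walk_left (n := n) (k := k) e (k - 1) (by omega)
    refine ⟨p.concat (adj_right e ⟨k - 1, by omega⟩ rfl).symm, ?_⟩
    intro v hv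
    rw [SimpleGraph.Walk.support_concat, List.mem_append] at hv
    rcases hv with hv | hv
    · rcases hp v hv with h | ⟨c', _, rfl⟩
      · exact Or.inl h
      · exact Or.inr (Or.inr ⟨c', rfl⟩)
    · rw [List.mem_singleton] at hv
      subst hv
      exact Or.inr (Or.inl rfl)

end Walks
section Sep

variable {n k : ℕ}

lemma conf_noinl {X : Set (VV n k)} :
    ∀ {u y : VV n k} (p : (subK n k).Walk u y), (∀ v ∈ p.support, v ∈ X) →
      (∀ i : Fin n, Sum.inl i ∉ X) → ∀ (e : EP n) (c : Fin k), u = Sum.inr (e, c) →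
      ∃ c', y = Sum.inr (e, c') := by
  intro u y p
  induction p with
  | nil => rintro _ _ e c rfl; exact ⟨c, rfl⟩
  | @cons u w _ hadj p ih =>
    rintro hsupp hnoinl e c rfl
    have hw : w ∈ X := hsupp w (by simp)
    have hsupp' : ∀ v ∈ p.support, v ∈ X := fun v hv => hsupp v (by simp [hv])
    rcases adj_inr_elim hadj with ⟨rfl, _⟩ | ⟨rfl, _⟩ | ⟨c', rfl, _⟩
    · exact absurd hw (hnoinl _)
    · exact absurd hw (hnoinl _)
    · exact ih hsupp' hnoinl e c' rfl

lemma interior_suffix {X : Set (VV n k)} (hX : IsConnSet (subK n k) X) {s : Fin n}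
    (hs : Sum.inl s ∈ X) {e : EP n} (h1 : Sum.inl e.val.1 ∉ X) {c : Fin k}
    (hc : Sum.inr (e, c) ∈ X) : ∀ c' : Fin k, (c : ℕ) ≤ (c' : ℕ) → Sum.inr (e, c') ∈ X := by
  obtain ⟨p, hp⟩ := hX.2 _ hc _ hs
  rcases master p hp with ⟨hm, _, _⟩ | ⟨_, hi, _⟩
  · exact absurd hm h1
  · exact hi

lemma interior_prefix {X : Set (VV n k)} (hX : IsConnSet (subK n k) X) {s : Fin n}
    (hs : Sum.inl s ∈ X) {e : EP n} (h2 : Sum.inl e.val.2 ∉ X) {c : Fin k}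
    (hc : Sum.inr (e, c) ∈ X) : ∀ c' : Fin k, (c' : ℕ) ≤ (c : ℕ) → Sum.inr (e, c') ∈ X := by
  obtain ⟨p, hp⟩ := hX.2 _ hc _ hs
  rcases master p hp with ⟨_, hi, _⟩ | ⟨hm, _, _⟩
  · exact hi
  · exact absurd hm h2

lemma subK_interior_empty {X : Set (VV n k)} (hX : IsConnSet (subK n k) X) {s : Fin n}
    (hs : Sum.inl s ∈ X) {e : EP n} (h1 : Sum.inl e.val.1 ∉ X) (h2 : Sum.inl e.val.2 ∉ X)
    (c : Fin k) : Sum.inr (e, c) ∉ X := by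
  intro hc
  obtain ⟨p, hp⟩ := hX.2 _ hc _ hs
  rcases master p hp with ⟨hm, _, _⟩ | ⟨hm, _, _⟩
  · exact absurd hm h1
  · exact absurd hm h2

/-- Any two branch vertices outside a connected set `X` are joined outside `X`. -/
lemma reach_branch (hn : 3 ≤ n) {X : Set (VV n k)} (hX : IsConnSet (subK n k) X)
    {a b : Fin n} (ha : Sum.inl a ∉ X) (hb : Sum.inl b ∉ X) :
    ConnIn (subK n k) Xᶜ (Sum.inl a) (Sum.inl b) := by
  classical
  -- a helper: a full edge path avoiding X
  have full : ∀ e : EP n, Sum.inl e.val.1 ∉ X → Sum.inl e.val.2 ∉ X →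
      (∀ c : Fin k, Sum.inr (e, c) ∉ X) →
      ConnIn (subK n k) Xᶜ (Sum.inl e.val.1) (Sum.inl e.val.2) := by
    intro e he1 he2 hint
    obtain ⟨p, hp⟩ := exists_walk_full (n := n) (k := k) e
    refine ⟨p, fun v hv => ?_⟩
    rcases hp v hv with rfl | rfl | ⟨c', rfl⟩
    · exact he1
    · exact he2
    · exact hint c'
  have conn_pair : ∀ x y : Fin n, x ≠ y → Sum.inl x ∉ X → Sum.inl y ∉ X →
      (∀ e : EP n, (e.val = (x, y) ∨ e.val = (y, x)) → ∀ c : Fin k, Sum.inr (e, c) ∉ X) →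
      ConnIn (subK n k) Xᶜ (Sum.inl x) (Sum.inl y) := by
    intro x y hxy hx hy hfree
    rcases lt_or_gt_of_ne hxy with h | h
    · exact full ⟨(x, y), h⟩ hx hy (hfree _ (Or.inl rfl))
    · exact connIn_symm (full ⟨(y, x), h⟩ hy hx (hfree _ (Or.inr rfl)))
  rcases eq_or_ne a b with rfl | hab
  · exact connIn_refl ha
  by_cases hbranch : ∃ s, Sum.inl s ∈ X
  · obtain ⟨s, hs⟩ := hbranch
    refine conn_pair a b hab ha hb fun e he c hc => ?_
    rcases he with he | he
    · exact subK_interior_empty hX hs (by rw [he]; exact ha) (by rw [he]; exact hb) c hc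
    · exact subK_interior_empty hX hs (by rw [he]; exact hb) (by rw [he]; exact ha) c hc
  · push_neg at hbranch
    -- X consists of interior vertices of a single subdivided edge
    obtain ⟨x₀, hx₀⟩ := hX.1
    obtain ⟨e₀, c₀, rfl⟩ : ∃ (e₀ : EP n) (c₀ : Fin k), x₀ = Sum.inr (e₀, c₀) := by
      cases x₀ with
      | inl i => exact absurd hx₀ (hbranch i)
      | inr ec => exact ⟨ec.1, ec.2, rfl⟩
    have hXsub : ∀ v ∈ X, ∃ c', v = Sum.inr (e₀, c') := by
      intro v hv
      obtain ⟨p, hp⟩ := hX.2 _ hx₀ _ hv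
      exact conf_noinl p hp hbranch e₀ c₀ rfl
    -- a third branch vertex
    obtain ⟨t, hta, htb⟩ : ∃ t : Fin n, t ≠ a ∧ t ≠ b := by
      have hcard : 0 < (({a, b} : Finset (Fin n))ᶜ).card := by
        rw [Finset.card_compl]
        have h2 : ({a, b} : Finset (Fin n)).card ≤ 2 :=
          (Finset.card_insert_le _ _).trans (by simp)
        have : Fintype.card (Fin n) = n := Fintype.card_fin n
        omega
      obtain ⟨t, ht⟩ := Finset.card_pos.mp hcard
      simp only [Finset.mem_compl, Finset.mem_insert, Finset.mem_singleton, not_or] at ht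
      exact ⟨t, ht.1, ht.2⟩
    have hfree_ne : ∀ x y : Fin n, x ≠ y → (∀ e : EP n, (e.val = (x, y) ∨ e.val = (y, x)) →
        e ≠ e₀) → ConnIn (subK n k) Xᶜ (Sum.inl x) (Sum.inl y) := by
      intro x y hxy hne
      refine conn_pair x y hxy (hbranch x) (hbranch y) fun e he c hc => ?_
      obtain ⟨c', heq⟩ := hXsub _ hc
      rw [Sum.inr.injEq, Prod.mk.injEq] at heq
      exact hne e he heq.1
    by_cases hcase : ∀ e : EP n, (e.val = (a, b) ∨ e.val = (b, a)) → e ≠ e₀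
    · exact hfree_ne a b hab hcase
    · push_neg at hcase
      obtain ⟨e, he, rfl⟩ := hcase
      have h1 : ConnIn (subK n k) Xᶜ (Sum.inl a) (Sum.inl t) := by
        refine hfree_ne a t hta.symm fun e' he' heq' => ?_
        subst heq'
        rcases he with h | h <;> rcases he' with h' | h' <;> rw [h] at h' <;>
          injection h' with p q
        · exact htb q.symm
        · exact hta p.symm
        · exact hta q.symm
        · exact htb p.symm
      have h2 : ConnIn (subK n k) Xᶜ (Sum.inl t) (Sum.inl b) := by
        refine hfree_ne t b htb fun e' he' heq' => ?_
        subst heq'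
        rcases he with h | h <;> rcases he' with h' | h' <;> rw [h] at h' <;>
          injection h' with p q
        · exact hta p.symm
        · exact htb q.symm
        · exact htb p.symm
        · exact hta q.symm
      exact connIn_trans h1 h2

end Sep

section Comp

variable {n k : ℕ}

def Cset (X : Set (VV n k)) (i : Fin n) : Set (VV n k) :=
  {w | ConnIn (subK n k) Xᶜ (Sum.inl i) w}

lemma base_mem_Cset {X : Set (VV n k)} {i : Fin n} (hi : Sum.inl i ∉ X) :
    Sum.inl i ∈ Cset X i := connIn_refl hi

lemma Cset_subset_compl {X : Set (VV n k)} {i : Fin n} : Cset X i ⊆ Xᶜ :=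
  fun _ hw => connIn_mem_right hw

lemma mem_Cset_trans {X : Set (VV n k)} {i : Fin n} {w w' : VV n k}
    (hw : w ∈ Cset X i) (h : ConnIn (subK n k) Xᶜ w w') : w' ∈ Cset X i :=
  connIn_trans hw h

lemma support_subset_Cset {X : Set (VV n k)} {i : Fin n} {w : VV n k}
    (p : (subK n k).Walk (Sum.inl i) w) (hp : ∀ v ∈ p.support, v ∈ Xᶜ) :
    ∀ v ∈ p.support, v ∈ Cset X i := by
  classical
  intro v hv
  exact ⟨p.takeUntil v hv, fun u hu =>
    hp u (SimpleGraph.Walk.support_takeUntil_subset p hv hu)⟩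

lemma isConnSet_Cset {X : Set (VV n k)} {i : Fin n} (hi : Sum.inl i ∉ X) :
    IsConnSet (subK n k) (Cset X i) := by
  refine ⟨⟨_, base_mem_Cset hi⟩, fun x hx y hy => ?_⟩
  obtain ⟨p, hp⟩ := hx
  obtain ⟨q, hq⟩ := hy
  refine ⟨p.reverse.append q, fun v hv => ?_⟩
  rw [SimpleGraph.Walk.mem_support_append_iff] at hv
  rcases hv with hv | hv
  · rw [SimpleGraph.Walk.support_reverse, List.mem_reverse] at hv
    exact support_subset_Cset p hp v hv
  · exact support_subset_Cset q hq v hv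

/-- All branch vertices outside `X` lie in the component `Cset X i`. -/
lemma branch_mem_Cset (hn : 3 ≤ n) {X : Set (VV n k)} (hX : IsConnSet (subK n k) X)
    {i j : Fin n} (hi : Sum.inl i ∉ X) (hj : Sum.inl j ∉ X) :
    Sum.inl j ∈ Cset X i := reach_branch hn hX hi hj

end Comp

section TreeBound

lemma parent_exists {W : Type u} (H : SimpleGraph W) {root v : W}
    (hr : H.Reachable root v) (hv : v ≠ root) :
    ∃ u, H.Adj v u ∧ H.dist root u < H.dist root v := by
  obtain ⟨p, hp⟩ := hr.exists_walk_length_eq_dist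
  have L : ∃ (u : W) (r : H.Walk u root), H.Adj v u ∧ r.length + 1 = p.reverse.length := by
    cases hq : p.reverse with
    | nil => exact absurd rfl hv
    | cons hadj r => exact ⟨_, r, hadj, by simp [SimpleGraph.Walk.length_cons]⟩
  obtain ⟨u, r, hu, hd⟩ := L
  have h1 : H.dist root u ≤ r.reverse.length := SimpleGraph.dist_le r.reverse
  rw [SimpleGraph.Walk.length_reverse] at h1
  rw [SimpleGraph.Walk.length_reverse, hp] at hd
  exact ⟨u, hu, by omega⟩

lemma tree_bound {n : ℕ} (H : SimpleGraph (Fin n)) (EF : Finset (EP n)) (e₀ : EP n)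
    (hcompat : ∀ a b : Fin n, H.Adj a b → ∀ h : a < b, (⟨(a, b), h⟩ : EP n) ∈ EF)
    (S : Finset (Fin n)) (root : Fin n) (hroot : root ∈ S)
    (hconn : ∀ v ∈ S, H.Reachable root v) : S.card ≤ EF.card + 1 := by
  classical
  have hpar : ∀ v ∈ S.erase root, ∃ u, H.Adj v u ∧ H.dist root u < H.dist root v :=
    fun v hv => parent_exists H (hconn v (Finset.mem_of_mem_erase hv))
      (Finset.ne_of_mem_erase hv)
  choose! par hadj hdist using hpar
  set f : Fin n → EP n := fun v =>
    if h : v < par v then ⟨(v, par v), h⟩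
    else if h' : par v < v then ⟨(par v, v), h'⟩ else e₀ with hf
  have hmaps : ∀ v ∈ S.erase root, f v ∈ EF := by
    intro v hv
    have hne : v ≠ par v := (hadj v hv).ne
    rcases lt_or_gt_of_ne hne with h | h
    · simp only [hf, dif_pos h]
      exact hcompat v (par v) (hadj v hv) h
    · simp only [hf, dif_neg (not_lt.mpr (le_of_lt h)), dif_pos h]
      exact hcompat (par v) v (hadj v hv).symm h
  have hinj : Set.InjOn f ↑(S.erase root) := by
    intro x hx y hy hxy
    have hnex : x ≠ par x := (hadj x hx).ne
    have hney : y ≠ par y := (hadj y hy).ne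
    have hdx := hdist x hx
    have hdy := hdist y hy
    have hval : (f x).val = (f y).val := congrArg Subtype.val hxy
    rcases lt_or_gt_of_ne hnex with h1 | h1 <;> rcases lt_or_gt_of_ne hney with h2 | h2
    · simp only [hf, dif_pos h1, dif_pos h2] at hval
      exact (Prod.mk.injEq _ _ _ _).mp hval |>.1
    · simp only [hf, dif_pos h1, dif_neg (not_lt.mpr (le_of_lt h2)), dif_pos h2] at hval
      obtain ⟨p, q⟩ := (Prod.mk.injEq _ _ _ _).mp hval
      rw [← p] at hdy; rw [q] at hdx; omega
    · simp only [hf, dif_neg (not_lt.mpr (le_of_lt h1)), dif_pos h1, dif_pos h2] at hval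
      obtain ⟨p, q⟩ := (Prod.mk.injEq _ _ _ _).mp hval
      rw [p] at hdx; rw [← q] at hdy; omega
    · simp only [hf, dif_neg (not_lt.mpr (le_of_lt h1)), dif_pos h1,
        dif_neg (not_lt.mpr (le_of_lt h2)), dif_pos h2] at hval
      exact (Prod.mk.injEq _ _ _ _).mp hval |>.2
  have hle : (S.erase root).card ≤ EF.card := Finset.card_le_card_of_injOn f hmaps hinj
  have := Finset.card_erase_add_one hroot
  omega

end TreeBound

section Count
open scoped Classical

variable {n k : ℕ}

noncomputable def EFX (X : Set (VV n k)) : Finset (EP n) :=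
  Finset.univ.filter (fun e => Sum.inl e.val.1 ∈ X ∧ Sum.inl e.val.2 ∈ X ∧
    ∀ c : Fin k, Sum.inr (e, c) ∈ X)

def HX (X : Set (VV n k)) : SimpleGraph (Fin n) := fromRel (BRel X)

lemma hcompat_HX (X : Set (VV n k)) :
    ∀ a b : Fin n, (HX X).Adj a b → ∀ h : a < b, (⟨(a, b), h⟩ : EP n) ∈ EFX X := by
  intro a b hab h
  rw [HX, fromRel_adj] at hab
  obtain ⟨hne, hr⟩ := hab
  simp only [EFX, Finset.mem_filter, Finset.mem_univ, true_and]
  rcases hr with ⟨_, h1, h2, h3⟩ | ⟨_, h1, h2, h3⟩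
  · exact ⟨h1, h2, fun c => h3 _ (Or.inl rfl) c⟩
  · exact ⟨h2, h1, fun c => h3 _ (Or.inr rfl) c⟩

lemma reach_HX {X : Set (VV n k)} (hX : IsConnSet (subK n k) X) {i j : Fin n}
    (hi : Sum.inl i ∈ X) (hj : Sum.inl j ∈ X) : (HX X).Reachable i j := by
  obtain ⟨p, hp⟩ := hX.2 _ hi _ hj
  have hrtg : Relation.ReflTransGen (BRel X) i j := master p hp
  rw [reachable_iff_reflTransGen]
  exact Relation.ReflTransGen.mono (p := (HX X).Adj) (fun a b hab => by rw [HX, fromRel_adj]; exact ⟨hab.1, Or.inl hab⟩) i j hrtg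

def defaultEP (hn : 3 ≤ n) : EP n :=
  ⟨(⟨0, by omega⟩, ⟨1, by omega⟩), by simp [Fin.lt_def]⟩

lemma card_lower_all (hn : 3 ≤ n) {X : Set (VV n k)} (hX : IsConnSet (subK n k) X)
    (hall : ∀ i : Fin n, Sum.inl i ∈ X) : n + (n - 1) * k ≤ X.ncard := by
  have hEF : n ≤ (EFX X).card + 1 := by
    have h0 : (0 : ℕ) < n := by omega
    have := tree_bound (HX X) (EFX X) (defaultEP hn) (hcompat_HX X) Finset.univ
      ⟨0, h0⟩ (Finset.mem_univ _) (fun v _ => reach_HX hX (hall _) (hall _))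
    simpa using this
  set F1 : Finset (VV n k) := (Finset.univ.image (Sum.inl : Fin n → VV n k)) ∪
    ((EFX X ×ˢ Finset.univ).image (Sum.inr : EP n × Fin k → VV n k)) with hF1
  have hsub : F1 ⊆ (Set.toFinite X).toFinset := by
    intro v hv
    rw [Set.Finite.mem_toFinset]
    simp only [hF1, Finset.mem_union, Finset.mem_image] at hv
    rcases hv with ⟨i, _, rfl⟩ | ⟨⟨e, c⟩, hec, rfl⟩
    · exact hall i
    · rw [Finset.mem_product] at hec
      have he := hec.1
      simp only [EFX, Finset.mem_filter] at he
      exact he.2.2.2 c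
  have hdisj : Disjoint (Finset.univ.image (Sum.inl : Fin n → VV n k))
      ((EFX X ×ˢ Finset.univ).image (Sum.inr : EP n × Fin k → VV n k)) := by
    rw [Finset.disjoint_left]
    rintro v hv1 hv2
    simp only [Finset.mem_image] at hv1 hv2
    obtain ⟨i, _, rfl⟩ := hv1
    obtain ⟨ec, _, h⟩ := hv2
    exact Sum.inl_ne_inr h.symm
  have hcard : F1.card = n + (EFX X).card * k := by
    rw [hF1, Finset.card_union_of_disjoint hdisj,
      Finset.card_image_of_injective _ Sum.inl_injective,
      Finset.card_image_of_injective _ Sum.inr_injective, Finset.card_product]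
    simp
  have hle := Finset.card_le_card hsub
  rw [hcard] at hle
  rw [Set.ncard_eq_toFinset_card X (Set.toFinite X)]
  have : (n - 1) * k ≤ (EFX X).card * k := Nat.mul_le_mul_right k (by omega)
  omega

/-- Part 1(a): a connected set of size at most `r` misses some branch vertex. -/
lemma exists_branch_notin (hn : 3 ≤ n) {X : Set (VV n k)} (hX : IsConnSet (subK n k) X)
    (hcard : X.ncard ≤ (n - 1) * (k + 1) - (k + 1) / 2) : ∃ i : Fin n, Sum.inl i ∉ X := by
  by_contra h
  push_neg at h
  have := card_lower_all hn hX h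
  have h2 : (k + 1) / 2 * 2 ≤ k + 1 := Nat.div_mul_le_self _ _
  have hexp : (n - 1) * (k + 1) = (n - 1) * k + (n - 1) := by ring
  omega

end Count

section Cross
open scoped Classical

variable {n k : ℕ}

def Touch (X X' : Set (VV n k)) (i i' : Fin n) : Prop :=
  ∃ x ∈ Cset X i, ∃ y ∈ Cset X' i', x = y ∨ (subK n k).Adj x y

lemma touch_symm {X X' : Set (VV n k)} {i i' : Fin n} (h : Touch X X' i i') :
    Touch X' X i' i := by
  obtain ⟨x, hx, y, hy, hxy⟩ := h
  refine ⟨y, hy, x, hx, ?_⟩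
  rcases hxy with rfl | hadj
  · exact Or.inl rfl
  · exact Or.inr hadj.symm

lemma cross_edge_bound (hn : 3 ≤ n) {X X' : Set (VV n k)}
    (hX : IsConnSet (subK n k) X) (hX' : IsConnSet (subK n k) X')
    {i i' : Fin n} (hi : Sum.inl i ∉ X) (hi' : Sum.inl i' ∉ X')
    {e : EP n} (ha : Sum.inl e.val.1 ∉ X) (hb' : Sum.inl e.val.2 ∉ X')
    (haX' : Sum.inl e.val.1 ∈ X') (hbX : Sum.inl e.val.2 ∈ X)
    (hnt : ¬ Touch X X' i i') :
    k + 1 ≤ (Finset.univ.filter (fun c : Fin k => Sum.inr (e, c) ∈ X)).card +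
      (Finset.univ.filter (fun c : Fin k => Sum.inr (e, c) ∈ X')).card := by
  have haC : Sum.inl e.val.1 ∈ Cset X i := branch_mem_Cset hn hX hi ha
  have hbC' : Sum.inl e.val.2 ∈ Cset X' i' := branch_mem_Cset hn hX' hi' hb'
  -- k = 0 : direct adjacency gives touch, contradiction
  rcases Nat.eq_zero_or_pos k with hk0 | hkpos
  · exfalso
    exact hnt ⟨_, haC, _, hbC', Or.inr (adj_branch _ _ (Fin.ne_of_lt e.prop) hk0)⟩
  set U := Finset.univ.filter (fun c : Fin k => Sum.inr (e, c) ∈ X) with hU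
  set D := Finset.univ.filter (fun c : Fin k => Sum.inr (e, c) ∈ X') with hD
  have hUup : ∀ c ∈ U, ∀ c' : Fin k, (c : ℕ) ≤ (c' : ℕ) → c' ∈ U := by
    intro c hc c' hcc
    rw [hU, Finset.mem_filter] at hc ⊢
    exact ⟨Finset.mem_univ _, interior_suffix hX hbX ha hc.2 c' hcc⟩
  have hDdown : ∀ c ∈ D, ∀ c' : Fin k, (c' : ℕ) ≤ (c : ℕ) → c' ∈ D := by
    intro c hc c' hcc
    rw [hD, Finset.mem_filter] at hc ⊢
    exact ⟨Finset.mem_univ _, interior_prefix hX' haX' hb' hc.2 c' hcc⟩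
  have reachA : ∀ c : Fin k, (∀ c₂ : Fin k, (c₂ : ℕ) ≤ (c : ℕ) → Sum.inr (e, c₂) ∉ X) →
      Sum.inr (e, c) ∈ Cset X i := by
    intro c hfree
    obtain ⟨p, hp⟩ := exists_walk_left (n := n) (k := k) e c.val c.isLt
    refine mem_Cset_trans haC ⟨p, fun v hv => ?_⟩
    rcases hp v hv with rfl | ⟨c', hc', rfl⟩
    · exact ha
    · exact hfree c' hc'
  have reachB : ∀ c : Fin k, (∀ c₂ : Fin k, (c : ℕ) ≤ (c₂ : ℕ) → Sum.inr (e, c₂) ∉ X') →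
      Sum.inr (e, c) ∈ Cset X' i' := by
    intro c hfree
    obtain ⟨p, hp⟩ := exists_walk_right (n := n) (k := k) e (k - 1 - c.val) c.val c.isLt
      (by omega)
    refine mem_Cset_trans hbC' ⟨p, fun v hv => ?_⟩
    rcases hp v hv with rfl | ⟨c', hc', rfl⟩
    · exact hb'
    · exact hfree c' hc'
  have hcover : ∀ c : Fin k, c ∈ U ∨ c ∈ D := by
    intro c
    by_contra hc
    push_neg at hc
    obtain ⟨hc1, hc2⟩ := hc
    refine hnt ⟨_, reachA c (fun c₂ hle hmem => hc1 ?_), _,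
      reachB c (fun c₂ hle hmem => hc2 ?_), Or.inl rfl⟩
    · exact hUup c₂ (by rw [hU, Finset.mem_filter]; exact ⟨Finset.mem_univ _, hmem⟩) c hle
    · exact hDdown c₂ (by rw [hD, Finset.mem_filter]; exact ⟨Finset.mem_univ _, hmem⟩) c hle
  have hinter : (U ∩ D).Nonempty := by
    by_contra hdis
    rw [Finset.not_nonempty_iff_eq_empty] at hdis
    have hdisj : ∀ c : Fin k, c ∈ U → c ∉ D := by
      intro c hcU hcD
      have : c ∈ U ∩ D := Finset.mem_inter.mpr ⟨hcU, hcD⟩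
      rw [hdis] at this
      exact absurd this (Finset.notMem_empty c)
    by_cases hUne : U.Nonempty
    · set α := U.min' hUne with hα
      have hαU : α ∈ U := U.min'_mem hUne
      rcases Nat.eq_zero_or_pos (α : ℕ) with hα0 | hαpos
      · -- U = univ, D = ∅ ; touch at the left end
        have hDfree : ∀ c₂ : Fin k, ((⟨0, hkpos⟩ : Fin k) : ℕ) ≤ (c₂ : ℕ) →
            Sum.inr (e, c₂) ∉ X' := by
          intro c₂ _ hmem
          have hc₂U : c₂ ∈ U := hUup α hαU c₂ (by omega)
          exact hdisj c₂ hc₂U (by rw [hD, Finset.mem_filter]; exact ⟨Finset.mem_univ _, hmem⟩)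
        exact hnt ⟨_, haC, _, reachB ⟨0, hkpos⟩ hDfree, Or.inr (adj_left e ⟨0, hkpos⟩ rfl)⟩
      · -- α ≥ 1 : touch between positions α-1 and α
        have hprev : Sum.inr (e, (⟨(α : ℕ) - 1, by omega⟩ : Fin k)) ∈ Cset X i := by
          refine reachA _ (fun c₂ hle hmem => ?_)
          have hge : (α : ℕ) ≤ (c₂ : ℕ) := U.min'_le c₂
            (by rw [hU, Finset.mem_filter]; exact ⟨Finset.mem_univ _, hmem⟩)
          have hle2 : (c₂ : ℕ) ≤ (α : ℕ) - 1 := hle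
          omega
        have hnext : Sum.inr (e, α) ∈ Cset X' i' := by
          refine reachB _ (fun c₂ hle hmem => ?_)
          have hc₂U : c₂ ∈ U := hUup α hαU c₂ hle
          exact hdisj c₂ hc₂U (by rw [hD, Finset.mem_filter]; exact ⟨Finset.mem_univ _, hmem⟩)
        refine hnt ⟨_, hprev, _, hnext, Or.inr (adj_succ e _ α ?_)⟩
        show (α : ℕ) = (α : ℕ) - 1 + 1
        omega
    · -- U empty: whole interior avoids X; touch at the right end
      have hXfree : ∀ c₂ : Fin k, (c₂ : ℕ) ≤ ((⟨k - 1, by omega⟩ : Fin k) : ℕ) →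
          Sum.inr (e, c₂) ∉ X := by
        intro c₂ _ hmem
        exact hUne ⟨c₂, by rw [hU, Finset.mem_filter]; exact ⟨Finset.mem_univ _, hmem⟩⟩
      exact hnt ⟨_, reachA ⟨k - 1, by omega⟩ hXfree, _, hbC',
        Or.inr ((adj_right e ⟨k - 1, by omega⟩ rfl).symm)⟩
  -- |U| + |D| = |U ∪ D| + |U ∩ D| ≥ k + 1
  have hunion : U ∪ D = Finset.univ := by
    ext c
    simp only [Finset.mem_union, Finset.mem_univ, iff_true]
    exact hcover c
  have := Finset.card_union_add_card_inter U D
  rw [hunion] at this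
  have hcu : (Finset.univ : Finset (Fin k)).card = k := by simp
  have hic : 1 ≤ (U ∩ D).card := Finset.card_pos.mpr hinter
  omega

end Cross

section Count2
open scoped Classical

variable {n k : ℕ}

lemma card_lower_cross {X : Set (VV n k)} (SB : Finset (Fin n))
    (hSB : ∀ j ∈ SB, Sum.inl j ∈ X) (crossEF : Finset (EP n))
    (hcross : ∀ e ∈ crossEF, Sum.inl e.val.1 ∉ X ∨ Sum.inl e.val.2 ∉ X) :
    SB.card + (EFX X).card * k +
      ∑ e ∈ crossEF, (Finset.univ.filter (fun c : Fin k => Sum.inr (e, c) ∈ X)).card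
      ≤ X.ncard := by
  set SegX : Finset (VV n k) := crossEF.biUnion (fun e =>
    (Finset.univ.filter (fun c : Fin k => Sum.inr (e, c) ∈ X)).image
      (fun c => (Sum.inr (e, c) : VV n k))) with hSegX
  set F1 : Finset (VV n k) := (SB.image (Sum.inl : Fin n → VV n k)) ∪
    ((EFX X ×ˢ Finset.univ).image (Sum.inr : EP n × Fin k → VV n k)) ∪ SegX with hF1
  have hsub : F1 ⊆ (Set.toFinite X).toFinset := by
    intro v hv
    rw [Set.Finite.mem_toFinset]
    simp only [hF1, Finset.mem_union] at hv
    rcases hv with (hv | hv) | hv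
    · obtain ⟨j, hj, rfl⟩ := Finset.mem_image.mp hv
      exact hSB j hj
    · obtain ⟨⟨e, c⟩, hec, rfl⟩ := Finset.mem_image.mp hv
      rw [Finset.mem_product] at hec
      have he := hec.1
      simp only [EFX, Finset.mem_filter] at he
      exact he.2.2.2 c
    · rw [hSegX, Finset.mem_biUnion] at hv
      obtain ⟨e, _, hv⟩ := hv
      obtain ⟨c, hc, rfl⟩ := Finset.mem_image.mp hv
      exact (Finset.mem_filter.mp hc).2
  have hSegcard : SegX.card =
      ∑ e ∈ crossEF, (Finset.univ.filter (fun c : Fin k => Sum.inr (e, c) ∈ X)).card := by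
    rw [hSegX, Finset.card_biUnion]
    · refine Finset.sum_congr rfl (fun e _ => ?_)
      apply Finset.card_image_of_injective
      intro c c' hcc
      rw [Sum.inr.injEq, Prod.mk.injEq] at hcc
      exact hcc.2
    · intro e _ e' _ hee
      rw [Function.onFun, Finset.disjoint_left]
      intro v hv hv'
      obtain ⟨c, _, rfl⟩ := Finset.mem_image.mp hv
      obtain ⟨c', _, heq⟩ := Finset.mem_image.mp hv'
      rw [Sum.inr.injEq, Prod.mk.injEq] at heq
      exact hee heq.1.symm
  have hd1 : Disjoint ((SB.image (Sum.inl : Fin n → VV n k)) ∪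
      ((EFX X ×ˢ Finset.univ).image (Sum.inr : EP n × Fin k → VV n k))) SegX := by
    rw [Finset.disjoint_left]
    intro v hv hv'
    rw [hSegX, Finset.mem_biUnion] at hv'
    obtain ⟨e, he, hv'⟩ := hv'
    obtain ⟨c, _, rfl⟩ := Finset.mem_image.mp hv'
    rcases Finset.mem_union.mp hv with hv | hv
    · obtain ⟨j, _, h⟩ := Finset.mem_image.mp hv
      exact Sum.inl_ne_inr h
    · obtain ⟨⟨e', c'⟩, hec, h⟩ := Finset.mem_image.mp hv
      rw [Sum.inr.injEq, Prod.mk.injEq] at h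
      rw [Finset.mem_product] at hec
      have he' := hec.1
      simp only [EFX, Finset.mem_filter] at he'
      rw [h.1] at he'
      rcases hcross e he with hx | hx
      · exact hx he'.2.1
      · exact hx he'.2.2.1
  have hd2 : Disjoint (SB.image (Sum.inl : Fin n → VV n k))
      ((EFX X ×ˢ Finset.univ).image (Sum.inr : EP n × Fin k → VV n k)) := by
    rw [Finset.disjoint_left]
    intro v hv hv'
    obtain ⟨j, _, rfl⟩ := Finset.mem_image.mp hv
    obtain ⟨ec, _, h⟩ := Finset.mem_image.mp hv'
    exact Sum.inl_ne_inr h.symm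
  have hcard : F1.card = SB.card + (EFX X).card * k +
      ∑ e ∈ crossEF, (Finset.univ.filter (fun c : Fin k => Sum.inr (e, c) ∈ X)).card := by
    rw [hF1, Finset.card_union_of_disjoint hd1, Finset.card_union_of_disjoint hd2,
      Finset.card_image_of_injective _ Sum.inl_injective,
      Finset.card_image_of_injective _ Sum.inr_injective, Finset.card_product, hSegcard]
    simp
  have hle := Finset.card_le_card hsub
  rw [hcard] at hle
  rw [Set.ncard_eq_toFinset_card X (Set.toFinite X)]
  exact hle

end Count2

section NoTouch
open scoped Classical

variable {n k : ℕ}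

lemma no_touch_contra (hn : 3 ≤ n) {X X' : Set (VV n k)}
    (hX : IsConnSet (subK n k) X) (hX' : IsConnSet (subK n k) X')
    (hcX : X.ncard ≤ (n - 1) * (k + 1) - (k + 1) / 2)
    (hcX' : X'.ncard ≤ (n - 1) * (k + 1) - (k + 1) / 2)
    {i i' : Fin n} (hi : Sum.inl i ∉ X) (hi' : Sum.inl i' ∉ X')
    (hcov : ∀ j : Fin n, Sum.inl j ∈ X ∨ Sum.inl j ∈ X')
    (hnt : ¬ Touch X X' i i') : False := by
  set Af := Finset.univ.filter (fun j : Fin n => Sum.inl j ∉ X) with hAf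
  set Bf := Finset.univ.filter (fun j : Fin n => Sum.inl j ∉ X') with hBf
  set Sf := Finset.univ.filter (fun j : Fin n => Sum.inl j ∈ X) with hSf
  set Sf' := Finset.univ.filter (fun j : Fin n => Sum.inl j ∈ X') with hSf'
  have hmemA : ∀ j : Fin n, j ∈ Af ↔ Sum.inl j ∉ X := fun j => by
    rw [hAf, Finset.mem_filter]; simp
  have hmemB : ∀ j : Fin n, j ∈ Bf ↔ Sum.inl j ∉ X' := fun j => by
    rw [hBf, Finset.mem_filter]; simp
  have hmemS : ∀ j : Fin n, j ∈ Sf ↔ Sum.inl j ∈ X := fun j => by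
    rw [hSf, Finset.mem_filter]; simp
  have hmemS' : ∀ j : Fin n, j ∈ Sf' ↔ Sum.inl j ∈ X' := fun j => by
    rw [hSf', Finset.mem_filter]; simp
  have hp1 : 1 ≤ Af.card := by
    obtain ⟨j, hj⟩ := exists_branch_notin hn hX hcX
    exact Finset.card_pos.mpr ⟨j, (hmemA j).mpr hj⟩
  have hq1 : 1 ≤ Bf.card := by
    obtain ⟨j, hj⟩ := exists_branch_notin hn hX' hcX'
    exact Finset.card_pos.mpr ⟨j, (hmemB j).mpr hj⟩
  have hABdisj : ∀ j, j ∈ Af → j ∉ Bf := by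
    intro j hjA hjB
    rcases hcov j with h | h
    · exact (hmemA j).mp hjA h
    · exact (hmemB j).mp hjB h
  have hBS : Bf ⊆ Sf := by
    intro j hj
    rcases hcov j with h | h
    · exact (hmemS j).mpr h
    · exact absurd h ((hmemB j).mp hj)
  have hAS' : Af ⊆ Sf' := by
    intro j hj
    rcases hcov j with h | h
    · exact absurd h ((hmemA j).mp hj)
    · exact (hmemS' j).mpr h
  have hm1 : 1 ≤ Sf.card := le_trans hq1 (Finset.card_le_card hBS)
  have hm1' : 1 ≤ Sf'.card := le_trans hp1 (Finset.card_le_card hAS')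
  have hSA : Sf.card + Af.card = n := by
    have := Finset.card_filter_add_card_filter_not
      (s := (Finset.univ : Finset (Fin n))) (p := fun j => Sum.inl j ∈ X)
    simpa using this
  have hSA' : Sf'.card + Bf.card = n := by
    have := Finset.card_filter_add_card_filter_not
      (s := (Finset.univ : Finset (Fin n))) (p := fun j => Sum.inl j ∈ X')
    simpa using this
  -- tree bounds
  obtain ⟨b₀, hb₀⟩ := Finset.card_pos.mp hm1
  obtain ⟨a₀, ha₀⟩ := Finset.card_pos.mp hm1'
  have htreeX : Sf.card ≤ (EFX X).card + 1 :=
    tree_bound (HX X) (EFX X) (defaultEP hn) (hcompat_HX X) Sf b₀ hb₀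
      (fun v hv => reach_HX hX ((hmemS b₀).mp hb₀) ((hmemS v).mp hv))
  have htreeX' : Sf'.card ≤ (EFX X').card + 1 :=
    tree_bound (HX X') (EFX X') (defaultEP hn) (hcompat_HX X') Sf' a₀ ha₀
      (fun v hv => reach_HX hX' ((hmemS' a₀).mp ha₀) ((hmemS' v).mp hv))
  -- cross edges
  set crossEF := Finset.univ.filter (fun e : EP n =>
    (e.val.1 ∈ Af ∧ e.val.2 ∈ Bf) ∨ (e.val.1 ∈ Bf ∧ e.val.2 ∈ Af)) with hcrossEF
  have hmemCross : ∀ e : EP n, e ∈ crossEF ↔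
      (e.val.1 ∈ Af ∧ e.val.2 ∈ Bf) ∨ (e.val.1 ∈ Bf ∧ e.val.2 ∈ Af) := fun e => by
    rw [hcrossEF, Finset.mem_filter]; simp
  have hpq : Af.card * Bf.card ≤ crossEF.card := by
    rw [← Finset.card_product]
    set g : Fin n × Fin n → EP n := fun ab =>
      if h : ab.1 < ab.2 then ⟨(ab.1, ab.2), h⟩
      else if h' : ab.2 < ab.1 then ⟨(ab.2, ab.1), h'⟩ else defaultEP hn with hg
    apply Finset.card_le_card_of_injOn g
    · rintro ⟨a, b⟩ hab
      rw [Finset.mem_coe, Finset.mem_product] at hab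
      obtain ⟨haA, hbB⟩ := hab
      have hne : a ≠ b := fun h => hABdisj a haA (h ▸ hbB)
      rcases lt_or_gt_of_ne hne with h | h
      · simp only [hg, dif_pos h]
        exact (hmemCross _).mpr (Or.inl ⟨haA, hbB⟩)
      · simp only [hg, dif_neg (not_lt.mpr (le_of_lt h)), dif_pos h]
        exact (hmemCross _).mpr (Or.inr ⟨hbB, haA⟩)
    · rintro ⟨a, b⟩ hab ⟨a', b'⟩ hab' heq
      simp only [Finset.coe_product, Set.mem_prod, Finset.mem_coe] at hab hab'
      obtain ⟨haA, hbB⟩ := hab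
      obtain ⟨haA', hbB'⟩ := hab'
      have hne : a ≠ b := fun h => hABdisj a haA (h ▸ hbB)
      have hne' : a' ≠ b' := fun h => hABdisj a' haA' (h ▸ hbB')
      have hval := congrArg Subtype.val heq
      rcases lt_or_gt_of_ne hne with h | h <;> rcases lt_or_gt_of_ne hne' with h' | h'
      · simp only [hg, dif_pos h, dif_pos h'] at hval
        obtain ⟨h1, h2⟩ := (Prod.mk.injEq _ _ _ _).mp hval
        exact Prod.ext h1 h2
      · simp only [hg, dif_pos h, dif_neg (not_lt.mpr (le_of_lt h')), dif_pos h'] at hval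
        obtain ⟨h1, h2⟩ := (Prod.mk.injEq _ _ _ _).mp hval
        exact absurd (h1 ▸ haA) (fun hc => hABdisj b' hc hbB')
      · simp only [hg, dif_neg (not_lt.mpr (le_of_lt h)), dif_pos h, dif_pos h'] at hval
        obtain ⟨h1, h2⟩ := (Prod.mk.injEq _ _ _ _).mp hval
        exact absurd (h1 ▸ hbB) (fun hc => hABdisj a' haA' hc)
      · simp only [hg, dif_neg (not_lt.mpr (le_of_lt h)), dif_pos h,
          dif_neg (not_lt.mpr (le_of_lt h')), dif_pos h'] at hval
        obtain ⟨h1, h2⟩ := (Prod.mk.injEq _ _ _ _).mp hval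
        exact Prod.ext h2 h1
  -- per-edge bound
  have hperedge : ∀ e ∈ crossEF,
      k + 1 ≤ (Finset.univ.filter (fun c : Fin k => Sum.inr (e, c) ∈ X)).card +
        (Finset.univ.filter (fun c : Fin k => Sum.inr (e, c) ∈ X')).card := by
    intro e he
    rcases (hmemCross e).mp he with ⟨h1, h2⟩ | ⟨h1, h2⟩
    · exact cross_edge_bound hn hX hX' hi hi' ((hmemA _).mp h1) ((hmemB _).mp h2)
        ((hmemS' _).mp (hAS' h1)) ((hmemS _).mp (hBS h2)) hnt
    · have := cross_edge_bound hn hX' hX hi' hi ((hmemB _).mp h1) ((hmemA _).mp h2)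
        ((hmemS _).mp (hBS h1)) ((hmemS' _).mp (hAS' h2))
        (fun h => hnt (touch_symm h))
      omega
  have hsum : crossEF.card * (k + 1) ≤
      (∑ e ∈ crossEF, (Finset.univ.filter (fun c : Fin k => Sum.inr (e, c) ∈ X)).card) +
      (∑ e ∈ crossEF, (Finset.univ.filter (fun c : Fin k => Sum.inr (e, c) ∈ X')).card) := by
    calc crossEF.card * (k + 1) = ∑ _e ∈ crossEF, (k + 1) := by
          rw [Finset.sum_const, smul_eq_mul]
      _ ≤ ∑ e ∈ crossEF,
            ((Finset.univ.filter (fun c : Fin k => Sum.inr (e, c) ∈ X)).card +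
             (Finset.univ.filter (fun c : Fin k => Sum.inr (e, c) ∈ X')).card) :=
          Finset.sum_le_sum hperedge
      _ = _ := Finset.sum_add_distrib
  -- counting inclusions
  have hcountX : Sf.card + (EFX X).card * k +
      (∑ e ∈ crossEF, (Finset.univ.filter (fun c : Fin k => Sum.inr (e, c) ∈ X)).card)
      ≤ X.ncard := by
    refine card_lower_cross Sf (fun j hj => (hmemS j).mp hj) crossEF (fun e he => ?_)
    rcases (hmemCross e).mp he with ⟨h1, _⟩ | ⟨_, h2⟩
    · exact Or.inl ((hmemA _).mp h1)
    · exact Or.inr ((hmemA _).mp h2)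
  have hcountX' : Sf'.card + (EFX X').card * k +
      (∑ e ∈ crossEF, (Finset.univ.filter (fun c : Fin k => Sum.inr (e, c) ∈ X')).card)
      ≤ X'.ncard := by
    refine card_lower_cross Sf' (fun j hj => (hmemS' j).mp hj) crossEF (fun e he => ?_)
    rcases (hmemCross e).mp he with ⟨_, h2⟩ | ⟨h1, _⟩
    · exact Or.inr ((hmemB _).mp h2)
    · exact Or.inl ((hmemB _).mp h1)
  -- final arithmetic
  obtain ⟨N, hN⟩ : ∃ N, n = N + 1 := ⟨n - 1, by omega⟩
  have h11 : 2 * X.ncard + k ≤ 2 * ((n - 1) * (k + 1)) := by omega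
  have h12 : 2 * X'.ncard + k ≤ 2 * ((n - 1) * (k + 1)) := by omega
  have e1 : (Sf.card - 1) * k ≤ (EFX X).card * k := Nat.mul_le_mul_right k (by omega)
  have e2 : (Sf'.card - 1) * k ≤ (EFX X').card * k := Nat.mul_le_mul_right k (by omega)
  have q1 : Sf.card * (k + 1) +
      (∑ e ∈ crossEF, (Finset.univ.filter (fun c : Fin k => Sum.inr (e, c) ∈ X)).card)
      ≤ X.ncard + k := by
    have expand : Sf.card * (k + 1) = Sf.card + (Sf.card - 1) * k + k := by
      obtain ⟨m₀, hm₀⟩ : ∃ m₀, Sf.card = m₀ + 1 := ⟨Sf.card - 1, by omega⟩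
      rw [hm₀, Nat.add_sub_cancel]; ring
    omega
  have q2 : Sf'.card * (k + 1) +
      (∑ e ∈ crossEF, (Finset.univ.filter (fun c : Fin k => Sum.inr (e, c) ∈ X')).card)
      ≤ X'.ncard + k := by
    have expand : Sf'.card * (k + 1) = Sf'.card + (Sf'.card - 1) * k + k := by
      obtain ⟨m₀, hm₀⟩ : ∃ m₀, Sf'.card = m₀ + 1 := ⟨Sf'.card - 1, by omega⟩
      rw [hm₀, Nat.add_sub_cancel]; ring
    omega
  have q3 : (Af.card * Bf.card) * (k + 1) ≤
      (∑ e ∈ crossEF, (Finset.univ.filter (fun c : Fin k => Sum.inr (e, c) ∈ X)).card) +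
      (∑ e ∈ crossEF, (Finset.univ.filter (fun c : Fin k => Sum.inr (e, c) ∈ X')).card) :=
    le_trans (Nat.mul_le_mul_right _ hpq) hsum
  have q4 : 2 * n - 1 ≤ Sf.card + Sf'.card + Af.card * Bf.card := by
    have hpq' : Af.card + Bf.card ≤ Af.card * Bf.card + 1 := by
      obtain ⟨p₀, hp₀⟩ : ∃ p₀, Af.card = p₀ + 1 := ⟨Af.card - 1, by omega⟩
      obtain ⟨q₀, hq₀⟩ : ∃ q₀, Bf.card = q₀ + 1 := ⟨Bf.card - 1, by omega⟩
      rw [hp₀, hq₀]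
      have expand2 : (p₀ + 1) * (q₀ + 1) = p₀ * q₀ + p₀ + q₀ + 1 := by ring
      omega
    omega
  have q5 : (2 * n - 1) * (k + 1) ≤ (Sf.card + Sf'.card + Af.card * Bf.card) * (k + 1) :=
    Nat.mul_le_mul_right _ q4
  have q6 : (Sf.card + Sf'.card + Af.card * Bf.card) * (k + 1) =
      Sf.card * (k + 1) + Sf'.card * (k + 1) + (Af.card * Bf.card) * (k + 1) := by ring
  have q7 : (2 * n - 1) * (k + 1) = 2 * ((n - 1) * (k + 1)) + (k + 1) := by
    subst hN
    have h1 : 2 * (N + 1) - 1 = 2 * N + 1 := by omega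
    rw [h1, Nat.add_sub_cancel]; ring
  omega

end NoTouch

section Final

variable {n k : ℕ}

theorem subK_bramble_main (hn : 3 ≤ n) :
    (∀ X : Set (VV n k),
      IsConnSet (subK n k) X → X.ncard ≤ (n - 1) * (k + 1) - (k + 1) / 2 →
        (∃ i : Fin n, Sum.inl i ∉ X) ∧
        ∀ i j : Fin n, Sum.inl i ∉ X → Sum.inl j ∉ X →
          ConnIn (subK n k) Xᶜ (Sum.inl i) (Sum.inl j)) ∧
    IsBramble (subK n k) (subKBramble n k ((n - 1) * (k + 1) - (k + 1) / 2)) ∧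
    ∀ Y, IsConnCover (subK n k) (subKBramble n k ((n - 1) * (k + 1) - (k + 1) / 2)) Y →
      (n - 1) * (k + 1) - (k + 1) / 2 < Y.ncard := by
  refine ⟨?_, ⟨?_, ?_⟩, ?_⟩
  · intro X hX hcard
    exact ⟨exists_branch_notin hn hX hcard,
      fun i j hi hj => reach_branch hn hX hi hj⟩
  · rintro S ⟨X, i, hX, hcard, hi, rfl⟩
    exact isConnSet_Cset hi
  · rintro S ⟨X, i, hX, hcard, hi, rfl⟩ S' ⟨X', i', hX', hcard', hi', rfl⟩
    by_cases htouch : Touch X X' i i'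
    · exact isConnSet_union_touch (isConnSet_Cset hi) (isConnSet_Cset hi') htouch
    · exfalso
      have hcov : ∀ j : Fin n, Sum.inl j ∈ X ∨ Sum.inl j ∈ X' := by
        intro j
        by_contra hc
        push_neg at hc
        exact htouch ⟨_, branch_mem_Cset hn hX hi hc.1, _,
          branch_mem_Cset hn hX' hi' hc.2, Or.inl rfl⟩
      exact no_touch_contra hn hX hX' hcard hcard' hi hi' hcov htouch
  · rintro Y ⟨hYconn, hYmeets⟩
    by_contra hcon
    push_neg at hcon
    obtain ⟨i, hi⟩ := exists_branch_notin hn hYconn hcon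
    obtain ⟨y, hy1, hy2⟩ := hYmeets (Cset Y i) ⟨Y, i, hYconn, hcon, hi, rfl⟩
    exact Cset_subset_compl hy2 hy1

end Final

/-- in the `k`-fold subdivision of `K_n`, with
`r = (n−1)(k+1) − ⌊(k+1)/2⌋`, every connected set `X` of size at most `r`
misses some branch vertex and all branch vertices outside `X` lie in one
component of `G − X`; the collection of these components is a bramble whose
connected order exceeds `r`. -/
theorem subK_bramble (n k : ℕ) (hn : 3 ≤ n) :
    (∀ X : Set (Fin n ⊕ ({p : Fin n × Fin n // p.1 < p.2} × Fin k)),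
      IsConnSet (subK n k) X → X.ncard ≤ (n - 1) * (k + 1) - (k + 1) / 2 →
        (∃ i : Fin n, Sum.inl i ∉ X) ∧
        ∀ i j : Fin n, Sum.inl i ∉ X → Sum.inl j ∉ X →
          ConnIn (subK n k) Xᶜ (Sum.inl i) (Sum.inl j)) ∧
    IsBramble (subK n k) (subKBramble n k ((n - 1) * (k + 1) - (k + 1) / 2)) ∧
    ∀ Y, IsConnCover (subK n k) (subKBramble n k ((n - 1) * (k + 1) - (k + 1) / 2)) Y →
      (n - 1) * (k + 1) - (k + 1) / 2 < Y.ncard := by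
  exact subK_bramble_main hn
end

section
/- For every graph G, cbn(G) − 1 ≤ wctw(G) ≤ ctw(G), where cbn(G) is the maximum connected order of a bramble of G, wctw(G) is the weak connected tree-width, and ctw(G) is the connected tree-width. -/
open SimpleGraph

universe u

section AuxLemmas

open SimpleGraph Set

variable {V ι : Type u}

/-- Path-closed ("subtree") subsets of a graph's vertex set. -/
def AuxSubtree (T : SimpleGraph ι) (C : Set ι) : Prop :=
  ∀ a ∈ C, ∀ b ∈ C, ∀ p : T.Walk a b, p.IsPath → ∀ v ∈ p.support, v ∈ C

lemma aux_exists_path {T : SimpleGraph ι} (hT : T.IsTree) (a b : ι) :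
    ∃ p : T.Walk a b, p.IsPath := by
  classical
  obtain ⟨w⟩ := hT.isConnected.preconnected a b
  exact ⟨w.bypass, w.bypass_isPath⟩

lemma aux_first_split {T : SimpleGraph ι} {a b : ι} (p : T.Walk a b) (S : Set ι)
    (hb : b ∈ S) :
    ∃ (m : ι) (p₁ : T.Walk a m) (p₂ : T.Walk m b), p₁.append p₂ = p ∧ m ∈ S ∧
      ∀ v ∈ p₁.support, v ∈ S → v = m := by
  classical
  revert hb
  induction p with
  | nil => intro hb; exact ⟨_, Walk.nil, Walk.nil, rfl, hb, by simp⟩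
  | @cons u x y h q ih =>
    intro hb
    by_cases hu : u ∈ S
    · exact ⟨u, Walk.nil, Walk.cons h q, rfl, hu, by simp⟩
    · obtain ⟨m, p₁, p₂, hap, hm, hfst⟩ := ih hb
      refine ⟨m, Walk.cons h p₁, p₂, by rw [Walk.cons_append, hap], hm, ?_⟩
      intro v hv hvS
      rw [Walk.support_cons, List.mem_cons] at hv
      rcases hv with rfl | hv
      · exact absurd hvS hu
      · exact hfst v hv hvS

lemma aux_median {T : SimpleGraph ι} (hT : T.IsTree) {a b c : ι}
    (p : T.Walk a b) (hp : p.IsPath) (q : T.Walk c b) (hq : q.IsPath)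
    (r : T.Walk a c) (hr : r.IsPath) :
    ∃ m, m ∈ p.support ∧ m ∈ q.support ∧ m ∈ r.support := by
  classical
  obtain ⟨m, p₁, p₂, hap, hmq, hfst⟩ :=
    aux_first_split p {v | v ∈ q.support} q.end_mem_support
  have hmq' : m ∈ q.support := hmq
  have hm_p : m ∈ p.support := by
    rw [← hap, Walk.mem_support_append_iff]; exact Or.inl p₁.end_mem_support
  have hp₁ : p₁.IsPath := by
    rw [← hap] at hp; exact hp.of_append_left
  have hq₁ : (q.takeUntil m hmq').IsPath := hq.takeUntil _
  set w₂ : T.Walk m c := (q.takeUntil m hmq').reverse with hw₂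
  have hw₂path : w₂.IsPath := hq₁.reverse
  have hw₂sub : ∀ v ∈ w₂.support, v ∈ q.support := by
    intro v hv
    rw [hw₂, Walk.support_reverse, List.mem_reverse] at hv
    exact Walk.support_takeUntil_subset _ _ hv
  set r' : T.Walk a c := p₁.append w₂ with hr'
  have hr'path : r'.IsPath := by
    rw [Walk.isPath_def, Walk.support_append]
    refine List.Nodup.append hp₁.support_nodup (hw₂path.support_nodup.tail) ?_
    intro v hv1 hv2
    have hv2' : v ∈ w₂.support := by
      rw [Walk.support_eq_cons w₂]; exact List.mem_cons_of_mem _ hv2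
    have hveq : v = m := hfst v hv1 (hw₂sub v hv2')
    have hmt : m ∉ w₂.support.tail := by
      have hcons : w₂.support = m :: w₂.support.tail := Walk.support_eq_cons w₂
      have hnd := hw₂path.support_nodup
      rw [hcons, List.nodup_cons] at hnd
      exact hnd.1
    exact hmt (hveq ▸ hv2)
  have heq : r = r' :=
    congrArg Subtype.val (hT.IsAcyclic.path_unique ⟨r, hr⟩ ⟨r', hr'path⟩)
  refine ⟨m, hm_p, hmq', ?_⟩
  rw [heq, hr', Walk.mem_support_append_iff]
  exact Or.inl p₁.end_mem_support

lemma aux_helly3 {T : SimpleGraph ι} (hT : T.IsTree) {A B C : Set ι}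
    (hA : AuxSubtree T A) (hB : AuxSubtree T B) (hC : AuxSubtree T C)
    (hab : (A ∩ B).Nonempty) (hbc : (B ∩ C).Nonempty) (hac : (A ∩ C).Nonempty) :
    (A ∩ B ∩ C).Nonempty := by
  obtain ⟨a, haA, haB⟩ := hab
  obtain ⟨b, hbB, hbC⟩ := hbc
  obtain ⟨c, hcA, hcC⟩ := hac
  obtain ⟨p, hp⟩ := aux_exists_path hT a b
  obtain ⟨q, hq⟩ := aux_exists_path hT c b
  obtain ⟨r, hr⟩ := aux_exists_path hT a c
  obtain ⟨m, hmp, hmq, hmr⟩ := aux_median hT p hp q hq r hr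
  exact ⟨m, ⟨hA a haA c hcA r hr m hmr, hB a haB b hbB p hp m hmp⟩,
    hC c hcC b hbC q hq m hmq⟩

lemma aux_helly_list {T : SimpleGraph ι} (hT : T.IsTree) :
    ∀ (n : ℕ) (L : List (Set ι)), L.length = n → L ≠ [] →
      (∀ C ∈ L, AuxSubtree T C) → (∀ C ∈ L, ∀ D ∈ L, (C ∩ D).Nonempty) →
      ∃ m, ∀ C ∈ L, m ∈ C := by
  intro n
  induction n with
  | zero =>
    intro L hL hne _ _
    exact absurd (List.length_eq_zero_iff.mp hL) hne
  | succ n ih =>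
    intro L hL hne hsub hpair
    rcases L with _ | ⟨C, L'⟩
    · exact absurd rfl hne
    rcases L' with _ | ⟨D, L''⟩
    · obtain ⟨m, hm, -⟩ := hpair C (by simp) C (by simp)
      refine ⟨m, ?_⟩
      intro E hE
      rw [List.mem_singleton] at hE
      subst hE; exact hm
    · -- L = C :: D :: L''
      have hCL : C ∈ C :: D :: L'' := by simp
      have hDL : D ∈ C :: D :: L'' := by simp
      have key : ∀ E ∈ L'', ((C ∩ D) ∩ E).Nonempty := by
        intro E hE
        have hEL : E ∈ C :: D :: L'' := by simp [hE]
        exact aux_helly3 hT (hsub C hCL) (hsub D hDL) (hsub E hEL)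
          (hpair C hCL D hDL) (hpair D hDL E hEL) (hpair C hCL E hEL)
      obtain ⟨m, hm⟩ := ih ((C ∩ D) :: L'')
        (by simpa using hL) (by simp)
        (by
          intro E hE
          rcases List.mem_cons.mp hE with rfl | hE
          · intro a ha b hb pth hpth v hv
            exact ⟨hsub C hCL a ha.1 b hb.1 pth hpth v hv,
              hsub D hDL a ha.2 b hb.2 pth hpth v hv⟩
          · exact hsub E (by simp [hE]))
        (by
          intro E hE F hF
          rcases List.mem_cons.mp hE with rfl | hE <;>
            rcases List.mem_cons.mp hF with rfl | hF
          · obtain ⟨x, hx⟩ := hpair C hCL D hDL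
            exact ⟨x, hx, hx⟩
          · exact key F hF
          · obtain ⟨x, hx1, hx2⟩ := key E hE
            exact ⟨x, hx2, hx1⟩
          · exact hpair E (by simp [hE]) F (by simp [hF]))
      have hmCD := hm (C ∩ D) (by simp)
      refine ⟨m, ?_⟩
      intro E hE
      rcases List.mem_cons.mp hE with rfl | hE
      · exact hmCD.1
      rcases List.mem_cons.mp hE with rfl | hE
      · exact hmCD.2
      · exact hm E (by simp [hE])

/-! Tree-decomposition separation lemmas. -/

variable {G : SimpleGraph V} {T : SimpleGraph ι}

/-- Same side of node `u` in the tree. -/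
def AuxR (T : SimpleGraph ι) (u a b : ι) : Prop := ∃ w : T.Walk a b, u ∉ w.support

lemma auxR_trans {u a b c : ι} (h1 : AuxR T u a b) (h2 : AuxR T u b c) :
    AuxR T u a c := by
  obtain ⟨w1, h1⟩ := h1
  obtain ⟨w2, h2⟩ := h2
  refine ⟨w1.append w2, ?_⟩
  rw [Walk.mem_support_append_iff]
  rintro (h | h) <;> [exact h1 h; exact h2 h]

lemma aux_bag_path (td : TreeDecomp G T) {v : V} {a b : ι}
    (ha : v ∈ td.bag a) (hb : v ∈ td.bag b) {p : T.Walk a b} (hp : p.IsPath) :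
    ∀ u ∈ p.support, v ∈ td.bag u :=
  fun u hu => td.bag_sep p hp u hu ⟨ha, hb⟩

lemma aux_same_side (td : TreeDecomp G T) {x : V} {u a b : ι}
    (hxu : x ∉ td.bag u) (ha : x ∈ td.bag a) (hb : x ∈ td.bag b) :
    AuxR T u a b := by
  obtain ⟨p, hp⟩ := aux_exists_path td.isTree a b
  by_cases hmem : u ∈ p.support
  · exact absurd (aux_bag_path td ha hb hp u hmem) hxu
  · exact ⟨p, hmem⟩

lemma aux_walk_side (td : TreeDecomp G T) {S : Set V} {u : ι}
    (hS : ∀ x ∈ S, x ∉ td.bag u) :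
    ∀ {v v' : V} (w : G.Walk v v'), (∀ x ∈ w.support, x ∈ S) →
      ∀ {a b : ι}, v ∈ td.bag a → v' ∈ td.bag b → AuxR T u a b := by
  intro v v' w
  induction w with
  | nil =>
    intro hw a b ha hb
    exact aux_same_side td (hS _ (hw _ (Walk.start_mem_support _))) ha hb
  | cons h w' ih =>
    intro hw a b ha hb
    obtain ⟨e, hve, hxe⟩ := td.exists_bag_adj h
    have hw' : ∀ y ∈ w'.support, y ∈ S := fun y hy =>
      hw y (by rw [Walk.support_cons]; exact List.mem_cons_of_mem _ hy)
    exact auxR_trans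
      (aux_same_side td (hS _ (hw _ (Walk.start_mem_support _))) ha hve)
      (ih hw' hxe hb)

lemma aux_not_on_path (td : TreeDecomp G T) {S : Set V} (hconn : IsConnSet G S)
    {u a b : ι} (hu : ∀ x ∈ S, x ∉ td.bag u)
    (ha : (td.bag a ∩ S).Nonempty) (hb : (td.bag b ∩ S).Nonempty)
    {p : T.Walk a b} (hp : p.IsPath) : u ∉ p.support := by
  classical
  obtain ⟨v, hva, hvS⟩ := ha
  obtain ⟨v', hv'b, hv'S⟩ := hb
  obtain ⟨w, hw⟩ := hconn.2 v hvS v' hv'S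
  obtain ⟨w', hw'⟩ := aux_walk_side td hu w (fun x hx => hw x hx) hva hv'b
  intro hup
  have heq : p = w'.bypass :=
    congrArg Subtype.val
      (td.isTree.IsAcyclic.path_unique ⟨p, hp⟩ ⟨w'.bypass, w'.bypass_isPath⟩)
  exact hw' (Walk.support_bypass_subset _ (heq ▸ hup))

lemma aux_subtree_TS (td : TreeDecomp G T) {S : Set V} (hconn : IsConnSet G S) :
    AuxSubtree T {t | (td.bag t ∩ S).Nonempty} := by
  intro a ha b hb p hp u hu
  by_contra hcon
  have hSu : ∀ x ∈ S, x ∉ td.bag u := fun x hxS hxu => hcon ⟨x, hxu, hxS⟩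
  exact aux_not_on_path td hconn hSu ha hb hp hu

lemma aux_touch (td : TreeDecomp G T) {S S' : Set V} :
    ∀ {v v' : V} (w : G.Walk v v'), v ∈ S → v' ∈ S' →
      (∀ x ∈ w.support, x ∈ S ∪ S') →
      ∃ t, (td.bag t ∩ S).Nonempty ∧ (td.bag t ∩ S').Nonempty := by
  intro v v' w
  induction w with
  | nil =>
    intro hv hv' _
    obtain ⟨t, ht⟩ := td.exists_bag _
    exact ⟨t, ⟨_, ht, hv⟩, ⟨_, ht, hv'⟩⟩
  | cons h w' ih =>
    intro hv hv' hw
    have hx := hw _ (by rw [Walk.support_cons]; exact List.mem_cons_of_mem _ (Walk.start_mem_support w'))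
    rcases hx with hx | hx
    · exact ih hx hv' (fun y hy =>
        hw y (by rw [Walk.support_cons]; exact List.mem_cons_of_mem _ hy))
    · obtain ⟨t, hvt, hxt⟩ := td.exists_bag_adj h
      exact ⟨t, ⟨_, hvt, hv⟩, ⟨_, hxt, hx⟩⟩

lemma aux_cover [Finite V] (td : TreeDecomp G T) {B : Set (Set V)}
    (hB : IsBramble G B) : ∃ t, ∀ S ∈ B, (td.bag t ∩ S).Nonempty := by
  classical
  rcases Set.eq_empty_or_nonempty B with rfl | hBne
  · have : Nonempty ι := td.isTree.isConnected.nonempty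
    exact ⟨Classical.arbitrary ι, by simp⟩
  · have hfin : B.Finite := Set.toFinite B
    set L : List (Set ι) :=
      hfin.toFinset.toList.map (fun S => {t | (td.bag t ∩ S).Nonempty}) with hLdef
    have hmem : ∀ S ∈ B, {t | (td.bag t ∩ S).Nonempty} ∈ L := by
      intro S hS
      rw [hLdef, List.mem_map]
      exact ⟨S, Finset.mem_toList.mpr (hfin.mem_toFinset.mpr hS), rfl⟩
    have hLmem : ∀ C ∈ L, ∃ S ∈ B, C = {t | (td.bag t ∩ S).Nonempty} := by
      intro C hC
      rw [hLdef, List.mem_map] at hC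
      obtain ⟨S, hS, hC⟩ := hC
      exact ⟨S, hfin.mem_toFinset.mp (Finset.mem_toList.mp hS), hC.symm⟩
    have hne : L ≠ [] := by
      obtain ⟨S, hS⟩ := hBne
      intro h
      rw [h] at hmem
      exact List.not_mem_nil (hmem S hS)
    have hsub : ∀ C ∈ L, AuxSubtree T C := by
      intro C hC
      obtain ⟨S, hS, rfl⟩ := hLmem C hC
      exact aux_subtree_TS td (hB.1 S hS)
    have hpair : ∀ C ∈ L, ∀ D ∈ L, (C ∩ D).Nonempty := by
      intro C hC D hD
      obtain ⟨S, hS, rfl⟩ := hLmem C hC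
      obtain ⟨S', hS', rfl⟩ := hLmem D hD
      obtain ⟨v, hvS⟩ := (hB.1 S hS).1
      obtain ⟨v', hv'S⟩ := (hB.1 S' hS').1
      obtain ⟨w, hw⟩ := (hB.2 S hS S' hS').2 v (Or.inl hvS) v' (Or.inr hv'S)
      obtain ⟨t, ht1, ht2⟩ := aux_touch td w hvS hv'S (fun x hx => hw x hx)
      exact ⟨t, ht1, ht2⟩
    obtain ⟨m, hm⟩ := aux_helly_list td.isTree L.length L rfl hne hsub hpair
    exact ⟨m, fun S hS => hm _ (hmem S hS)⟩

/-! The star decomposition into connected components. -/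

lemma aux_path_self_nil {H : SimpleGraph ι} {a : ι} (p : H.Walk a a)
    (hp : p.IsPath) : p = Walk.nil := by
  cases p with
  | nil => rfl
  | cons h q =>
    exfalso
    have hnd := hp.support_nodup
    rw [Walk.support_cons, List.nodup_cons] at hnd
    exact hnd.1 q.end_mem_support

lemma aux_star_acyclic (c₀ : ι) :
    (SimpleGraph.fromRel (fun x _ => x = c₀)).IsAcyclic := by
  intro v p hp
  have h3 := hp.three_le_length
  cases p with
  | nil => simp at h3
  | @cons _ x₁ _ h₁ q =>
    cases q with
    | nil => simp at h3
    | @cons _ x₂ _ h₂ q' =>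
      cases q' with
      | nil => simp at h3
      | @cons _ x₃ _ h₃ q'' =>
        rw [SimpleGraph.fromRel_adj] at h₁ h₂ h₃
        have hnd := hp.support_nodup
        simp only [Walk.support_cons, List.tail_cons, List.nodup_cons] at hnd
        by_cases hx₁ : x₁ = c₀
        · -- x₁ = c₀
          have hx₂ : x₂ ≠ c₀ := fun h => h₂.1 (hx₁.trans h.symm)
          have hx₃ : x₃ = c₀ := h₃.2.elim (fun h => absurd h hx₂) id
          have he : x₁ = x₃ := hx₁.trans hx₃.symm
          exact hnd.1 (List.mem_cons_of_mem _
            (by rw [he]; exact q''.start_mem_support))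
        · have hv : v = c₀ := h₁.2.resolve_right hx₁
          have hx₂ : x₂ = c₀ := h₂.2.resolve_left hx₁
          have he : x₂ = v := hx₂.trans hv.symm
          exact hnd.2.1 (by rw [he]; exact q''.end_mem_support)

lemma aux_support_reachable {x y : V} (w : G.Walk x y) :
    ∀ u ∈ w.support, G.Reachable x u := by
  induction w with
  | nil => intro u hu; rw [Walk.support_nil, List.mem_singleton] at hu; subst hu; rfl
  | @cons v z y h w' ih =>
    intro u hu
    rw [Walk.support_cons, List.mem_cons] at hu
    rcases hu with rfl | hu
    · rfl
    · exact h.reachable.trans (ih u hu)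

lemma aux_ctw_witness [Finite V] [Nonempty V] (G : SimpleGraph V) :
    ∃ (ι : Type u) (T : SimpleGraph ι) (td : TreeDecomp G T),
      td.IsConn ∧ ∀ t, (td.bag t).ncard ≤ Nat.card V + 1 := by
  classical
  set c₀ : G.ConnectedComponent := G.connectedComponentMk (Classical.arbitrary V)
  set T : SimpleGraph G.ConnectedComponent :=
    SimpleGraph.fromRel (fun x _ => x = c₀) with hT
  have hadj : ∀ x : G.ConnectedComponent, x ≠ c₀ → T.Adj x c₀ := by
    intro x hx
    rw [hT, SimpleGraph.fromRel_adj]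
    exact ⟨hx, Or.inr rfl⟩
  haveI : Nonempty G.ConnectedComponent := ⟨c₀⟩
  have htree : T.IsTree := by
    constructor
    · apply SimpleGraph.Connected.mk
      intro x y
      have hx : T.Reachable x c₀ := by
        by_cases h : x = c₀
        · rw [h]
        · exact (hadj x h).reachable
      have hy : T.Reachable y c₀ := by
        by_cases h : y = c₀
        · rw [h]
        · exact (hadj y h).reachable
      exact hx.trans hy.symm
    · exact aux_star_acyclic c₀
  refine ⟨G.ConnectedComponent, T,
    { isTree := htree
      bag := fun c => {v | G.connectedComponentMk v = c}
      exists_bag := fun v => ⟨_, rfl⟩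
      exists_bag_adj := by
        intro u v h
        exact ⟨G.connectedComponentMk u, rfl, SimpleGraph.ConnectedComponent.sound h.symm.reachable⟩
      bag_sep := by
        intro t₁ t₃ p hp t₂ ht₂ v hv
        obtain ⟨h1, h3⟩ := hv
        have h13 : t₁ = t₃ := h1.symm.trans h3
        subst h13
        have hnil : p = Walk.nil := aux_path_self_nil p hp
        subst hnil
        rw [Walk.support_nil, List.mem_singleton] at ht₂
        subst ht₂
        exact h1 }, ?_, ?_⟩
  · intro c
    obtain ⟨v, hv⟩ := c.exists_rep
    constructor
    · exact ⟨v, hv⟩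
    · intro x hx y hy
      have hxy : G.Reachable x y := by
        have : G.connectedComponentMk x = G.connectedComponentMk y := by
          rw [Set.mem_setOf_eq] at hx hy
          rw [hx, hy]
        exact (SimpleGraph.ConnectedComponent.eq).mp this
      obtain ⟨w⟩ := hxy
      refine ⟨w, ?_⟩
      intro u hu
      have : G.Reachable x u := aux_support_reachable w u hu
      rw [Set.mem_setOf_eq] at hx ⊢
      rw [← hx]
      exact (SimpleGraph.ConnectedComponent.eq).mpr this.symm
  · intro c
    calc ({v | G.connectedComponentMk v = c} : Set V).ncard
        ≤ (Set.univ : Set V).ncard :=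
          Set.ncard_le_ncard (Set.subset_univ _) Set.finite_univ
      _ = Nat.card V := Set.ncard_univ V
      _ ≤ Nat.card V + 1 := Nat.le_succ _

end AuxLemmas

/-- for every graph, `cbn(G) − 1 ≤ wctw(G) ≤ ctw(G)`. -/
theorem cbn_wctw_ctw {V : Type u} [Finite V] (G : SimpleGraph V) :
    cbn G - 1 ≤ wctw G ∧ wctw G ≤ ctw G := by
  classical
  constructor
  · -- cbn G - 1 ≤ wctw G
    rw [tsub_le_iff_right, cbn]
    apply csSup_le
    · exact ⟨connOrder G ∅, ∅, ⟨fun S h => absurd h (Set.notMem_empty S),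
        fun S h => absurd h (Set.notMem_empty S)⟩, rfl⟩
    · rintro n ⟨B, hB, rfl⟩
      by_cases hV : Nonempty V
      · obtain ⟨ι, T, td0, hconn0, hbound0⟩ := aux_ctw_witness G
        have hWne : {k | ∃ (ι : Type u) (T : SimpleGraph ι) (td : TreeDecomp G T),
            ∀ t, ∃ X, td.bag t ⊆ X ∧ IsConnSet G X ∧ X.ncard ≤ k + 1}.Nonempty :=
          ⟨Nat.card V, ι, T, td0, fun t => ⟨td0.bag t, subset_rfl, hconn0 t, hbound0 t⟩⟩
        have hmem : ∃ (ι' : Type u) (T' : SimpleGraph ι') (td : TreeDecomp G T'),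
            ∀ t, ∃ X, td.bag t ⊆ X ∧ IsConnSet G X ∧ X.ncard ≤ wctw G + 1 :=
          Nat.sInf_mem hWne
        obtain ⟨ι', T', td, hX⟩ := hmem
        obtain ⟨t, ht⟩ := aux_cover td hB
        obtain ⟨X, hsubX, hXconn, hXcard⟩ := hX t
        have h1 : connOrder G B ≤ X.ncard := by
          apply Nat.sInf_le
          refine ⟨X, ⟨hXconn, ?_⟩, rfl⟩
          intro S hS
          exact (ht S hS).mono (Set.inter_subset_inter_left S hsubX)
        exact h1.trans hXcard
      · have hempty : {n | ∃ X, IsConnCover G B X ∧ X.ncard = n} = ∅ := by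
          ext k
          simp only [Set.mem_setOf_eq, Set.mem_empty_iff_false, iff_false]
          rintro ⟨X, ⟨⟨⟨v, hv⟩, _⟩, _⟩, _⟩
          exact hV ⟨v⟩
        rw [connOrder, hempty, Nat.sInf_empty]
        exact Nat.zero_le _
  · by_cases hV : Nonempty V
    · obtain ⟨ι, T, td0, hconn0, hbound0⟩ := aux_ctw_witness G
      have hCne : {k | ∃ (ι : Type u) (T : SimpleGraph ι) (td : TreeDecomp G T),
          td.IsConn ∧ ∀ t, (td.bag t).ncard ≤ k + 1}.Nonempty :=
        ⟨Nat.card V, ι, T, td0, hconn0, hbound0⟩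
      have hmem : ∃ (ι' : Type u) (T' : SimpleGraph ι') (td : TreeDecomp G T'),
          td.IsConn ∧ ∀ t, (td.bag t).ncard ≤ ctw G + 1 := Nat.sInf_mem hCne
      obtain ⟨ι', T', td, hc, hb⟩ := hmem
      exact Nat.sInf_le ⟨ι', T', td, fun t => ⟨td.bag t, subset_rfl, hc t, hb t⟩⟩
    · have hw0 : wctw G = 0 := by
        rw [wctw]
        apply Nat.sInf_eq_zero.mpr
        right
        ext k
        simp only [Set.mem_setOf_eq, Set.mem_empty_iff_false, iff_false]
        rintro ⟨ι, T, td, h⟩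
        have : Nonempty ι := td.isTree.isConnected.nonempty
        obtain ⟨X, _, hXc, _⟩ := h (Classical.arbitrary ι)
        obtain ⟨v, _⟩ := hXc.1
        exact hV ⟨v⟩
      rw [hw0]
      exact Nat.zero_le _
end
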